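/- arXiv:1805.03331 — 2 statements merged into one kernel-verified Lean document; each statement's English description precedes it below -/
import Mathlib

section
/- Let L = (𝔬_{E,f}, 𝒩). Then L ⊕ −L is represented by a reduced form of GK type (a, σ), where: (1) if E/F is unramified, (a, σ) = ((0,0,0,0), (12)(34)) if f = 0; ((0, f, f, 2f), (14)(23)) if 0 < f < 2e; ((0, 2e, 2f−2e, 2f), (12)(34)) if f ≥ 2e. (2) If E/F is ramified with d = 2g ≤ 2e, (a, σ) = ((0, 2f+1, 2g−1, 2g+2f), (14)(23)) if 0 ≤ f ≤ g−1; ((0, g+f, g+f, 2g+2f), (14)(23)) if g ≤ f < 2e−g; ((0, 2e, 2g+2f−2e, 2g+2f), (12)(34)) if f ≥ 2e−g. (3) If E/F is ramified with d = 2e+1, (a, σ) = ((0, 2f+1, 2e, 2e+2f+1), (13)(24)) if 0 ≤ f < e; ((0, 2e, 2f+1, 2e+2f+1), (12)(34)) if f ≥ e. -/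
open scoped Classical

noncomputable section

namespace GK

variable {F : Type} [Field F]

/-- The axioms making `(F, O, ord)` a nonarchimedean local field of characteristic zero
(i.e. a finite extension of `ℚ_p`): `ord` is a surjective discrete valuation, `O` is its
valuation ring, the residue field is finite of cardinality `q` and of characteristic `p`,
and `O` is complete. -/
structure LocalFieldAxioms (O : Subring F) (ord : F → ℤ) (p q : ℕ) : Prop where
  ord_mul : ∀ x y : F, x ≠ 0 → y ≠ 0 → ord (x * y) = ord x + ord y
  min_le_ord_add : ∀ x y : F, x ≠ 0 → y ≠ 0 → x + y ≠ 0 → min (ord x) (ord y) ≤ ord (x + y)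
  ord_surjective : ∀ k : ℤ, ∃ x : F, x ≠ 0 ∧ ord x = k
  mem_integers : ∀ x : F, x ∈ O ↔ x = 0 ∨ 0 ≤ ord x
  charZero : CharZero F
  p_prime : Nat.Prime p
  ord_p_pos : 0 < ord (p : F)
  residue_card : ∃ S : Finset F, S.card = q ∧ (∀ x ∈ S, x ∈ O) ∧
    (∀ x : F, x ∈ O → ∃ y ∈ S, x - y = 0 ∨ 1 ≤ ord (x - y)) ∧
    ∀ y ∈ S, ∀ z ∈ S, (y - z = 0 ∨ 1 ≤ ord (y - z)) → y = z
  complete : ∀ x : ℕ → F, (∀ k, x k ∈ O) →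
    (∀ k : ℕ, x (k+1) - x k = 0 ∨ (k : ℤ) ≤ ord (x (k+1) - x k)) →
    ∃ L : F, L ∈ O ∧ ∀ k : ℕ, x k - L = 0 ∨ (k : ℤ) ≤ ord (x k - L)

/-- `x` lies in `c • O`. -/
def MemScale (O : Subring F) (c x : F) : Prop := ∃ w, w ∈ O ∧ x = c * w

/-- A half-integral symmetric matrix: symmetric, integral diagonal, and
twice every entry is integral. -/
def HalfIntegral (O : Subring F) {n : ℕ} (B : Matrix (Fin n) (Fin n) F) : Prop :=
  B.IsSymm ∧ (∀ i, B i i ∈ O) ∧ ∀ i j, 2 * B i j ∈ O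

/-- `U ∈ GLₙ(O)`: entries in `O` and determinant a unit of `O`. -/
def IsGLO (O : Subring F) (ord : F → ℤ) {n : ℕ} (U : Matrix (Fin n) (Fin n) F) : Prop :=
  (∀ i j, U i j ∈ O) ∧ U.det ≠ 0 ∧ ord U.det = 0

/-- `GLₙ(O)`-equivalence of matrices: `B' = ᵗU · B · U`. -/
def EquivO (O : Subring F) (ord : F → ℤ) {n : ℕ} (B B' : Matrix (Fin n) (Fin n) F) : Prop :=
  ∃ U : Matrix (Fin n) (Fin n) F, IsGLO O ord U ∧ B' = U.transpose * B * U

/-- `a ∈ S(B)` : a non-decreasing sequence of naturals with `ord (B i i) ≥ a i` and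
`ord (2 B i j) ≥ (a i + a j)/2`. -/
def InS (ord : F → ℤ) {n : ℕ} (B : Matrix (Fin n) (Fin n) F) (a : Fin n → ℕ) : Prop :=
  Monotone a ∧ (∀ i, B i i = 0 ∨ (a i : ℤ) ≤ ord (B i i)) ∧
    ∀ i j, 2 * B i j = 0 ∨ (a i : ℤ) + (a j : ℤ) ≤ 2 * ord (2 * B i j)

/-- The union of the `S(ᵗU·B·U)` over all `U ∈ GLₙ(O)`. -/
def GKSet (O : Subring F) (ord : F → ℤ) {n : ℕ} (B : Matrix (Fin n) (Fin n) F) :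
    Set (Fin n → ℕ) :=
  {a | ∃ B', EquivO O ord B B' ∧ InS ord B' a}

/-- Lexicographic comparison of sequences. -/
def LexLE {n : ℕ} (a b : Fin n → ℕ) : Prop :=
  a = b ∨ ∃ k, (∀ j, j < k → a j = b j) ∧ a k < b k

/-- `a` is the Gross–Keating invariant of `B` : the lexicographically greatest
element of `⋃_U S(ᵗU·B·U)`. -/
def IsGK (O : Subring F) (ord : F → ℤ) {n : ℕ} (B : Matrix (Fin n) (Fin n) F)
    (a : Fin n → ℕ) : Prop :=
  a ∈ GKSet O ord B ∧ ∀ b ∈ GKSet O ord B, LexLE b a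

/-- Orthogonal (block diagonal) sum of two square matrices. -/
def orthSum {m k : ℕ} (A : Matrix (Fin m) (Fin m) F) (B : Matrix (Fin k) (Fin k) F) :
    Matrix (Fin (m + k)) (Fin (m + k)) F :=
  Matrix.reindex finSumFinEquiv finSumFinEquiv (Matrix.fromBlocks A 0 0 B)

/-- The congruence condition `ᵗX·B·X − B ∈ 𝔭^N · ℋₙ(𝔬)` for a matrix `X` with
entries in `O`. -/
def DensCond (O : Subring F) (ord : F → ℤ) {n : ℕ}
    (B X : Matrix (Fin n) (Fin n) F) (N : ℕ) : Prop :=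
  (∀ i j, X i j ∈ O) ∧
  (∀ i, (X.transpose * B * X - B) i i = 0 ∨
      (N : ℤ) ≤ ord ((X.transpose * B * X - B) i i)) ∧
  ∀ i j, 2 * (X.transpose * B * X - B) i j = 0 ∨
      (N : ℤ) ≤ ord (2 * (X.transpose * B * X - B) i j)

/-- The number of solutions `X ∈ Mₙ(𝔬/𝔭^N)` of `ᵗX·B·X ≡ B mod 𝔭^N ℋₙ(𝔬)`,
counted as residue classes mod `𝔭^N` of integral matrix solutions. -/
def densCount (O : Subring F) (ord : F → ℤ) {n : ℕ}
    (B : Matrix (Fin n) (Fin n) F) (N : ℕ) : ℕ :=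
  Nat.card (Quot (fun X Y : {X : Matrix (Fin n) (Fin n) F // DensCond O ord B X N} =>
    ∀ i j, X.1 i j - Y.1 i j = 0 ∨ (N : ℤ) ≤ ord (X.1 i j - Y.1 i j)))

/-- `β` is the local density `β(L)` of the quadratic lattice with Gram matrix `B`:
`β = (1/2)·(q^N)^{-n(n-1)/2} · #{X ∈ Mₙ(𝔬/𝔭^N) : ᵗX·B·X ≡ B}` for all large `N`. -/
def IsLocalDensity (O : Subring F) (ord : F → ℤ) (q : ℕ) {n : ℕ}
    (B : Matrix (Fin n) (Fin n) F) (β : ℝ) : Prop :=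
  ∃ N₀ : ℕ, ∀ N ≥ N₀,
    β = (1/2) * (densCount O ord B N : ℝ) / ((q : ℝ) ^ (N * (n * (n-1) / 2)))

/-- A unimodular (Gram) matrix: integral entries and unit determinant. -/
def IsUnimodularMat (O : Subring F) (ord : F → ℤ) {ι : Type} [Fintype ι] [DecidableEq ι]
    (C : Matrix ι ι F) : Prop :=
  (∀ i j, C i j ∈ O) ∧ C.det ≠ 0 ∧ ord C.det = 0

/-- `C` is `π^i`-modular. -/
def IsModularMat (O : Subring F) (ord : F → ℤ) (π : F) {ι : Type} [Fintype ι] [DecidableEq ι]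
    (C : Matrix ι ι F) (i : ℤ) : Prop :=
  IsUnimodularMat O ord (π ^ (-i) • C)

/-- `B` is (the Gram matrix of) a Jordan splitting, the block of level `i`
consisting of the indices `s` with `m s = i`, and being `π^i`-modular. -/
def IsJordanMatrix (O : Subring F) (ord : F → ℤ) (π : F) {n : ℕ}
    (B : Matrix (Fin n) (Fin n) F) (m : Fin n → ℤ) : Prop :=
  (∀ s t, m s ≠ m t → B s t = 0) ∧
  ∀ i : ℤ, (∃ s, m s = i) →
    IsModularMat O ord π
      (B.submatrix (fun s : {s : Fin n // m s = i} => (s : Fin n))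
        (fun s : {s : Fin n // m s = i} => (s : Fin n))) i

/-- The `π^i`-modular Jordan component of the lattice with Gram matrix `B` is nonzero. -/
def HasJordanComponent (O : Subring F) (ord : F → ℤ) (π : F) {n : ℕ}
    (B : Matrix (Fin n) (Fin n) F) (i : ℤ) : Prop :=
  ∃ (B' : Matrix (Fin n) (Fin n) F) (m : Fin n → ℤ),
    EquivO O ord B B' ∧ IsJordanMatrix O ord π B' m ∧ ∃ s, m s = i

/-- number of indices in the level `i` Jordan block. -/
def jordanRank {n : ℕ} (m : Fin n → ℤ) (i : ℤ) : ℕ :=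
  (Finset.univ.filter fun s => m s = i).card

/-- The level `i` Jordan constituent of the Jordan matrix `B` has parity type I,
i.e. its norm ideal is all of `O` (some normalized diagonal entry is a unit). -/
def JordanTypeI (ord : F → ℤ) (π : F) {n : ℕ}
    (B : Matrix (Fin n) (Fin n) F) (m : Fin n → ℤ) (i : ℤ) : Prop :=
  ∃ s, m s = i ∧ π ^ (-i) * B s s ≠ 0 ∧ ord (π ^ (-i) * B s s) = 0

/-- The sublattice `L ∩ π^i L♯ = {x ∈ 𝔬ⁿ : ⟨x, L⟩ ⊆ π^i 𝔬}` of the lattice with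
Gram matrix `B`. -/
def DualCapLattice (O : Subring F) (π : F) {n : ℕ}
    (B : Matrix (Fin n) (Fin n) F) (i : ℤ) : Set (Fin n → F) :=
  {x | (∀ s, x s ∈ O) ∧ ∀ s, MemScale O (π ^ i) (B.mulVec x s)}

/-- `C` is a Gram matrix of the quadratic lattice `(L ∩ π^i L♯, π^{-i} Q)`. -/
def IsGramOfDualCap (O : Subring F) (π : F) {n : ℕ}
    (B : Matrix (Fin n) (Fin n) F) (i : ℤ) (C : Matrix (Fin n) (Fin n) F) : Prop :=
  ∃ W : Matrix (Fin n) (Fin n) F, W.det ≠ 0 ∧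
    (∀ t, (fun s => W s t) ∈ DualCapLattice O π B i) ∧
    (∀ x ∈ DualCapLattice O π B i, ∃ c : Fin n → F, (∀ t, c t ∈ O) ∧ x = W.mulVec c) ∧
    C = π ^ (-i) • (W.transpose * B * W)

/-- `σ` is an `a`-admissible involution (Ikeda–Katsurada). -/
def IsAdmissible {n : ℕ} (a : Fin n → ℕ) (σ : Fin n → Fin n) : Prop :=
  Monotone a ∧
  (∀ i, σ (σ i) = i) ∧
  -- `#P⁰ ≤ 2`
  (∀ i j k, σ i = i → σ j = j → σ k = k → i = j ∨ i = k ∨ j = k) ∧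
  -- distinct fixed points have values of different parities
  (∀ i j, σ i = i → σ j = j → i ≠ j → a i % 2 ≠ a j % 2) ∧
  -- maximality condition at fixed points
  (∀ i, σ i = i → ∀ j, (σ j = j ∨ a (σ j) < a j) → a j % 2 = a i % 2 → a j ≤ a i) ∧
  -- at most one element of `P⁺` in each block
  (∀ i j, a i = a j → a (σ i) < a i → a (σ j) < a j → i = j) ∧
  -- at most one element of `P⁻ ∪ P⁰` in each block
  (∀ i j, a i = a j → (a i < a (σ i) ∨ σ i = i) → (a j < a (σ j) ∨ σ j = j) → i = j) ∧
  -- the matching conditions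
  (∀ i, a i < a (σ i) → a (σ i) % 2 = a i % 2 ∧
    ∀ j, a (σ j) < a j → a i < a j → a j % 2 = a i % 2 → a (σ i) ≤ a j) ∧
  ∀ i, a (σ i) < a i →
    ∀ j, a j < a (σ j) → a j < a i → a j % 2 = a i % 2 → a j ≤ a (σ i)

/-- `B` is a reduced form of GK type `(a, σ)` (Ikeda–Katsurada). -/
def IsReducedForm (O : Subring F) (ord : F → ℤ) {n : ℕ}
    (B : Matrix (Fin n) (Fin n) F) (a : Fin n → ℕ) (σ : Fin n → Fin n) : Prop :=
  HalfIntegral O B ∧ B.det ≠ 0 ∧ InS ord B a ∧ IsAdmissible a σ ∧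
  (∀ i, σ i ≠ i → 2 * B i (σ i) ≠ 0 ∧ 2 * ord (2 * B i (σ i)) = (a i : ℤ) + (a (σ i) : ℤ)) ∧
  (∀ i, (σ i = i ∨ a i < a (σ i)) → B i i ≠ 0 ∧ ord (B i i) = (a i : ℤ)) ∧
  ∀ i j, j ≠ i → j ≠ σ i → 2 * B i j = 0 ∨ (a i : ℤ) + (a j : ℤ) < 2 * ord (2 * B i j)

/-- `D` is a nonzero square of `F`. -/
def IsSquareNZ (D : F) : Prop := ∃ c : F, c ≠ 0 ∧ D = c * c

/-- `F(√D)/F` is unramified (possibly trivial): `D` times a square is of the form `1 + 4t`,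
`t ∈ O`. -/
def UnramSqrt (O : Subring F) (D : F) : Prop :=
  ∃ c t : F, c ≠ 0 ∧ t ∈ O ∧ D * (c * c) = 1 + 4 * t

/-- `ζ = ξ_B` for a (nondegenerate) even-size half-integral `B`. -/
def XiIs (O : Subring F) {n : ℕ} (B : Matrix (Fin n) (Fin n) F) (ζ : ℤ) : Prop :=
  (IsSquareNZ ((-4 : F) ^ (n / 2) * B.det) ∧ ζ = 1) ∨
  (¬ IsSquareNZ ((-4 : F) ^ (n / 2) * B.det) ∧
    UnramSqrt O ((-4 : F) ^ (n / 2) * B.det) ∧ ζ = -1) ∨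
  (¬ IsSquareNZ ((-4 : F) ^ (n / 2) * B.det) ∧
    ¬ UnramSqrt O ((-4 : F) ^ (n / 2) * B.det) ∧ ζ = 0)

/-- the columns of `W` span a totally isotropic subspace for `B`. -/
def IsIsotropicSub {n k : ℕ} (B : Matrix (Fin n) (Fin n) F)
    (W : Matrix (Fin n) (Fin k) F) : Prop :=
  (∀ c : Fin k → F, W.mulVec c = 0 → c = 0) ∧ ∀ s t, (W.transpose * B * W) s t = 0

/-- `(Fⁿ, B)` is split: it has a totally isotropic subspace of dimension `⌊n/2⌋`. -/
def SplitSpace {n : ℕ} (B : Matrix (Fin n) (Fin n) F) : Prop :=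
  ∃ W : Matrix (Fin n) (Fin (n / 2)) F, IsIsotropicSub B W

/-- `ζ = η_B` for an odd-size nondegenerate `B`. -/
def EtaIs {n : ℕ} (B : Matrix (Fin n) (Fin n) F) (ζ : ℤ) : Prop :=
  (SplitSpace B ∧ ζ = 1) ∨ (¬ SplitSpace B ∧ ζ = -1)

/-- An extended Gross–Keating datum `(n₁,…,n_r; m₁,…,m_r; ζ₁,…,ζ_r)`. -/
def EGKDatum : Type := Σ r : ℕ, (Fin r → ℕ) × (Fin r → ℕ) × (Fin r → ℤ)

/-- leading principal `k × k` submatrix. -/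
def leadBlock {n : ℕ} (B : Matrix (Fin n) (Fin n) F) (k : ℕ) (h : k ≤ n) :
    Matrix (Fin k) (Fin k) F :=
  B.submatrix (Fin.castLE h) (Fin.castLE h)

/-- `dat = (n₁,…,n_r; m₁,…,m_r; ζ₁,…,ζ_r)` is the extended GK datum of the reduced
form `B` with `GK(B) = a`. -/
def IsEGKOfReduced (O : Subring F) {n : ℕ} (B : Matrix (Fin n) (Fin n) F)
    (a : Fin n → ℕ) (dat : EGKDatum) : Prop :=
  StrictMono dat.2.2.1 ∧
  (∀ s, 0 < dat.2.1 s) ∧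
  (∀ t : Fin n, ∃ s, a t = dat.2.2.1 s) ∧
  (∀ s, (Finset.univ.filter fun t => a t = dat.2.2.1 s).card = dat.2.1 s) ∧
  ∀ s : Fin dat.1,
    ∃ h : (∑ u ∈ Finset.univ.filter (fun u => u ≤ s), dat.2.1 u) ≤ n,
      ((∑ u ∈ Finset.univ.filter (fun u => u ≤ s), dat.2.1 u) % 2 = 0 →
        XiIs O (leadBlock B _ h) (dat.2.2.2 s)) ∧
      ((∑ u ∈ Finset.univ.filter (fun u => u ≤ s), dat.2.1 u) % 2 = 1 →
        EtaIs (leadBlock B _ h) (dat.2.2.2 s))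

/-- `dat` is the extended GK datum of (the lattice with Gram matrix) `B`. -/
def IsEGK (O : Subring F) (ord : F → ℤ) {n : ℕ} (B : Matrix (Fin n) (Fin n) F)
    (dat : EGKDatum) : Prop :=
  ∃ (B' : Matrix (Fin n) (Fin n) F) (a : Fin n → ℕ) (σ : Fin n → Fin n),
    EquivO O ord B B' ∧ IsReducedForm O ord B' a σ ∧ IsEGKOfReduced O B' a dat

/-- `dat` is the truncated extended GK datum `EGK(B)^{≤1}`: the EGK datum of the
upper-left block (of size the number of GK entries `≤ 1`) of a reduced form
equivalent to `B`. -/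
def IsEGKle1 (O : Subring F) (ord : F → ℤ) {n : ℕ} (B : Matrix (Fin n) (Fin n) F)
    (dat : EGKDatum) : Prop :=
  ∃ (B' : Matrix (Fin n) (Fin n) F) (a : Fin n → ℕ) (σ : Fin n → Fin n)
    (h : (Finset.univ.filter fun t => a t ≤ 1).card ≤ n),
    EquivO O ord B B' ∧ IsReducedForm O ord B' a σ ∧
    IsEGK O ord (leadBlock B' _ h) dat

/-- truncated EGK datum computed from a given reduced form `B` itself. -/
def TruncEGKOfReduced (O : Subring F) (ord : F → ℤ) {n : ℕ}
    (B : Matrix (Fin n) (Fin n) F) (dat : EGKDatum) : Prop :=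
  ∃ (a : Fin n → ℕ) (σ : Fin n → Fin n)
    (h : (Finset.univ.filter fun t => a t ≤ 1).card ≤ n),
    IsReducedForm O ord B a σ ∧ IsEGK O ord (leadBlock B _ h) dat

/-- `c` is the non-decreasing rearrangement of the concatenation of `a` and `b`. -/
def IsMergeOf {m k n : ℕ} (a : Fin m → ℕ) (b : Fin k → ℕ) (c : Fin n → ℕ) : Prop :=
  Monotone c ∧ ∃ φ : (Fin m ⊕ Fin k) ≃ Fin n, ∀ x, c (φ x) = Sum.elim a b x

/-- the value `Q(x) = ᵗx·C·x` of the quadratic form with Gram matrix `C`. -/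
def Qval {n : ℕ} (C : Matrix (Fin n) (Fin n) F) (x : Fin n → F) : F :=
  dotProduct x (C.mulVec x)

/-- the sublattice `B(A)` of `A = 𝔬ⁿ`: integral vectors with `Q(x) ∈ 2𝔬`. -/
def BAset (O : Subring F) {n : ℕ} (C : Matrix (Fin n) (Fin n) F) : Set (Fin n → F) :=
  {x | (∀ s, x s ∈ O) ∧ MemScale O 2 (Qval C x)}

/-- membership in the sublattice `Z(A)`: the radical of the quadratic form
`(1/2)Q mod 2` on `B(A)/2A`. -/
def InZA (O : Subring F) {n : ℕ} (C : Matrix (Fin n) (Fin n) F) (x : Fin n → F) : Prop :=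
  x ∈ BAset O C ∧ MemScale O 4 (Qval C x) ∧
    ∀ y ∈ BAset O C, MemScale O 2 (dotProduct x (C.mulVec y))

/-- the cardinality of the residue space `V̄ = B(A)/Z(A)`. -/
def residueSpaceCard (O : Subring F) {n : ℕ} (C : Matrix (Fin n) (Fin n) F) : ℕ :=
  Nat.card (Quot (fun x y : (BAset O C : Set (Fin n → F)) => InZA O C (x.1 - y.1)))

/-- the norm ideal of the lattice with Gram matrix `C` is all of `𝔬`. -/
def NormUnit (O : Subring F) (ord : F → ℤ) {n : ℕ} (C : Matrix (Fin n) (Fin n) F) : Prop :=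
  ∃ x : Fin n → F, (∀ s, x s ∈ O) ∧ Qval C x ≠ 0 ∧ ord (Qval C x) = 0

/-- the residue quadratic form `q̄` on `V̄ = B(A)/Z(A)` is split: `V̄` has even
dimension `2k` and carries a totally isotropic subspace of dimension `k`. -/
def ResidueSplit (O : Subring F) (ord : F → ℤ) (q : ℕ) {n : ℕ}
    (C : Matrix (Fin n) (Fin n) F) : Prop :=
  ∃ k : ℕ, residueSpaceCard O C = q ^ (2 * k) ∧
    ∃ vs : Fin k → (Fin n → F),
      (∀ t, vs t ∈ BAset O C) ∧
      (∀ t, MemScale O 4 (Qval C (vs t))) ∧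
      (∀ s t, MemScale O 2 (dotProduct (vs s) (C.mulVec (vs t)))) ∧
      ∀ c : Fin k → F, (∀ t, c t ∈ O) → (∃ t, c t ≠ 0 ∧ ord (c t) = 0) →
        ¬ InZA O C (∑ t, c t • vs t)

/-- a square matrix over `F` of some size. -/
def SqB (F : Type) [Field F] : Type := (k : ℕ) × Matrix (Fin k) (Fin k) F

/-- total size of a list of square matrices. -/
def dims : List (SqB F) → ℕ
  | [] => 0
  | a :: t => a.1 + dims t

/-- orthogonal sum of a list of square matrices. -/
def listSum : (l : List (SqB F)) → Matrix (Fin (dims l)) (Fin (dims l)) F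
  | [] => 0
  | a :: t => orthSum a.2 (listSum t)

/-- a `2×2` block `2^i·[[2a, u],[u, 2b]]` with `a, b ∈ 𝔬`, `u ∈ 𝔬ˣ`. -/
def IsDagBlock (O : Subring F) (ord : F → ℤ) (π : F) (i : ℤ) (blk : SqB F) : Prop :=
  ∃ a u b : F, a ∈ O ∧ b ∈ O ∧ u ∈ O ∧ u ≠ 0 ∧ ord u = 0 ∧
    blk = ⟨2, π ^ i • !![2*a, u; u, 2*b]⟩

/-- The data of a semisimple quadratic `F`-algebra `E` (a quadratic field extension or
`F × F`), together with a generator `ω` of its maximal order `𝔬_E = 𝔬 + 𝔬ω`,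
the valuation `d` of the discriminant of `E/F`, and the invariant `ξ`. -/
structure QuadAlgebraAxioms (O : Subring F) (ord : F → ℤ)
    (E : Type) [CommRing E] [Algebra F E] (ω : E) (d : ℕ) (ξ : ℤ) : Prop where
  finrank_two : Module.finrank F E = 2
  reduced : ∀ x : E, x * x = 0 → x = 0
  indep : ∀ a b : F, algebraMap F E a + algebraMap F E b * ω = 0 → a = 0 ∧ b = 0
  trace_mem : Algebra.trace F E ω ∈ O
  norm_mem : Algebra.norm F ω ∈ O
  max_order : ∀ x : E, Algebra.trace F E x ∈ O → Algebra.norm F x ∈ O →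
    ∃ a b : F, a ∈ O ∧ b ∈ O ∧ x = algebraMap F E a + algebraMap F E b * ω
  disc_ne : (Algebra.trace F E ω) ^ 2 - 4 * Algebra.norm F ω ≠ 0
  disc_ord : ord ((Algebra.trace F E ω) ^ 2 - 4 * Algebra.norm F ω) = d
  xi_def : ξ = if (∃ x : E, x * x = x ∧ x ≠ 0 ∧ x ≠ 1) then 1 else if d = 0 then -1 else 0

/-- Gram matrix of the norm form on the order `𝔬_{E,f} = 𝔬 + 𝔬·ϖ^f ω` of conductor `f`,
with respect to the basis `(1, ϖ^f ω)`; here `T = tr(ω)` and `S = N(ω)`. -/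
def normGram (π T S : F) (f : ℕ) : Matrix (Fin 2) (Fin 2) F :=
  !![1, π ^ f * T / 2; π ^ f * T / 2, π ^ (2 * f) * S]

/-- the order `𝔬_{E,f} = 𝔬 + 𝔭^f 𝔬_E`, as a subset of `E`. -/
def orderSet (O : Subring F) (π : F) {E : Type} [CommRing E] [Algebra F E]
    (ω : E) (f : ℕ) : Set E :=
  {x | ∃ a b : F, a ∈ O ∧ b ∈ O ∧ x = algebraMap F E a + algebraMap F E (b * π ^ f) * ω}

/-- the set `V_N = {α ∈ 𝔬_{E,f} : 𝒩(α) ≡ 1 mod 𝔭^N}`. -/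
def normOneSet (O : Subring F) (ord : F → ℤ) (π : F) {E : Type} [CommRing E] [Algebra F E]
    (ω : E) (f N : ℕ) : Set E :=
  {x ∈ orderSet O π ω f |
    Algebra.norm F x - 1 = 0 ∨ (N : ℤ) ≤ ord (Algebra.norm F x - 1)}

/-- a rank‑2 lattice Gram matrix is indecomposable: not `GL₂(𝔬)`-equivalent to an
orthogonal sum of two rank‑1 lattices. -/
def Indecomposable2 (O : Subring F) (ord : F → ℤ) (G : Matrix (Fin 2) (Fin 2) F) : Prop :=
  ¬ ∃ B' : Matrix (Fin 2) (Fin 2) F, EquivO O ord G B' ∧ B' 0 1 = 0 ∧ B' 1 0 = 0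




set_option linter.unusedSectionVars false
set_option maxHeartbeats 1000000

section AuxiliaryLemmas

variable {O : Subring F} {ord : F → ℤ} {q : ℕ}
variable {E : Type} [CommRing E] [Algebra F E] {ω : E} {d : ℕ} {ξ : ℤ}

/-- `x = 0` or `ord x ≥ k`. -/
def Vo (ord : F → ℤ) (x : F) (k : ℤ) : Prop := x = 0 ∨ k ≤ ord x

namespace LocalFieldAxioms
variable (hF : LocalFieldAxioms O ord 2 q)
include hF

lemma ord_one : ord (1 : F) = 0 := by
  have h := hF.ord_mul 1 1 one_ne_zero one_ne_zero
  rw [mul_one] at h; omega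

lemma ord_neg_one : ord (-1 : F) = 0 := by
  have h := hF.ord_mul (-1) (-1) (by norm_num) (by norm_num)
  rw [neg_mul_neg, one_mul, hF.ord_one] at h; omega

lemma ord_neg {x : F} (hx : x ≠ 0) : ord (-x) = ord x := by
  have h := hF.ord_mul (-1) x (by norm_num) hx
  rw [neg_one_mul, hF.ord_neg_one] at h; omega

lemma ord_inv {x : F} (hx : x ≠ 0) : ord x⁻¹ = -ord x := by
  have h := hF.ord_mul x x⁻¹ hx (inv_ne_zero hx)
  rw [mul_inv_cancel₀ hx, hF.ord_one] at h; omega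

lemma ord_div {x y : F} (hx : x ≠ 0) (hy : y ≠ 0) : ord (x / y) = ord x - ord y := by
  rw [div_eq_mul_inv, hF.ord_mul x y⁻¹ hx (inv_ne_zero hy), hF.ord_inv hy]; ring

lemma ord_pow {x : F} (hx : x ≠ 0) (n : ℕ) : ord (x ^ n) = n * ord x := by
  induction n with
  | zero => simpa using hF.ord_one
  | succ n ih =>
      rw [pow_succ, hF.ord_mul _ _ (pow_ne_zero _ hx) hx, ih]; push_cast; ring

lemma two_ne : (2 : F) ≠ 0 := by
  haveI := hF.charZero; exact two_ne_zero

lemma four_ne : (4 : F) ≠ 0 := by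
  haveI := hF.charZero; norm_num

lemma ord_two_pos : 0 < ord (2 : F) := by
  have h := hF.ord_p_pos
  norm_num at h; exact h

lemma ord_four : ord (4 : F) = 2 * ord (2 : F) := by
  have h : (4 : F) = 2 * 2 := by norm_num
  rw [h, hF.ord_mul 2 2 hF.two_ne hF.two_ne]; ring

lemma mem_iff_Vo {x : F} : x ∈ O ↔ Vo ord x 0 := hF.mem_integers x

lemma Vo_zero (k : ℤ) : Vo ord (0 : F) k := Or.inl rfl

lemma Vo_mono {x : F} {k k' : ℤ} (h : k' ≤ k) (hx : Vo ord x k) : Vo ord x k' := by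
  rcases hx with h0 | h1
  · exact Or.inl h0
  · exact Or.inr (le_trans h h1)

lemma Vo_neg {x : F} {k : ℤ} (hx : Vo ord x k) : Vo ord (-x) k := by
  rcases hx with h0 | h1
  · exact Or.inl (by rw [h0, neg_zero])
  · by_cases h : x = 0
    · exact Or.inl (by rw [h, neg_zero])
    · exact Or.inr (by rw [hF.ord_neg h]; exact h1)

lemma Vo_add {x y : F} {k : ℤ} (hx : Vo ord x k) (hy : Vo ord y k) : Vo ord (x + y) k := by
  rcases hx with h0 | h1
  · rw [h0, zero_add]; exact hy
  rcases hy with h0 | h2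
  · rw [h0, add_zero]; exact Or.inr h1
  by_cases hxy : x + y = 0
  · exact Or.inl hxy
  by_cases hx0 : x = 0
  · rw [hx0, zero_add]; exact Or.inr h2
  by_cases hy0 : y = 0
  · rw [hy0, add_zero]; exact Or.inr h1
  have := hF.min_le_ord_add x y hx0 hy0 hxy
  exact Or.inr (by omega)

lemma Vo_sub {x y : F} {k : ℤ} (hx : Vo ord x k) (hy : Vo ord y k) : Vo ord (x - y) k := by
  rw [sub_eq_add_neg]; exact hF.Vo_add hx (hF.Vo_neg hy)

lemma Vo_mul {x y : F} {k l : ℤ} (hx : Vo ord x k) (hy : Vo ord y l) :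
    Vo ord (x * y) (k + l) := by
  rcases hx with h0 | h1
  · exact Or.inl (by rw [h0, zero_mul])
  rcases hy with h0 | h2
  · exact Or.inl (by rw [h0, mul_zero])
  by_cases hx0 : x = 0
  · exact Or.inl (by rw [hx0, zero_mul])
  by_cases hy0 : y = 0
  · exact Or.inl (by rw [hy0, mul_zero])
  exact Or.inr (by rw [hF.ord_mul x y hx0 hy0]; omega)

lemma Vo_of_mem {x : F} (hx : x ∈ O) : Vo ord x 0 := (hF.mem_integers x).mp hx

lemma mem_of_Vo {x : F} (hx : Vo ord x 0) : x ∈ O := (hF.mem_integers x).mpr hx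

lemma mem_of_ord {x : F} {k : ℤ} (h0 : 0 ≤ k) (hx : Vo ord x k) : x ∈ O :=
  hF.mem_of_Vo (hF.Vo_mono h0 hx)

/-- if `ord y > ord x` (or `y = 0`) then `x + y ≠ 0` and `ord (x+y) = ord x`. -/
lemma ord_add_eq_left {x y : F} (hx : x ≠ 0) (hy : Vo ord y (ord x + 1)) :
    x + y ≠ 0 ∧ ord (x + y) = ord x := by
  rcases hy with h0 | h1
  · rw [h0, add_zero]; exact ⟨hx, rfl⟩
  by_cases hy0 : y = 0
  · rw [hy0, add_zero]; exact ⟨hx, rfl⟩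
  have hne : x + y ≠ 0 := by
    intro h
    have : y = -x := by linear_combination h
    rw [this, hF.ord_neg hx] at h1; omega
  have h2 := hF.min_le_ord_add x y hx hy0 hne
  have h3 : ord x ≥ min (ord (x + y)) (ord (-y)) := by
    have hxx : x = (x + y) + (-y) := by ring
    have := hF.min_le_ord_add (x + y) (-y) hne (neg_ne_zero.mpr hy0) (by rw [← hxx]; exact hx)
    rw [← hxx] at this; exact this
  rw [hF.ord_neg hy0] at h3
  exact ⟨hne, by omega⟩

lemma ord_mul3 {x y z : F} (hx : x ≠ 0) (hy : y ≠ 0) (hz : z ≠ 0) :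
    ord (x * y * z) = ord x + ord y + ord z := by
  rw [hF.ord_mul _ z (mul_ne_zero hx hy) hz, hF.ord_mul x y hx hy]

end LocalFieldAxioms

namespace QuadAlgebraAxioms
variable (hE : QuadAlgebraAxioms O ord E ω d ξ)
include hE

lemma li_pair : LinearIndependent F ![(1 : E), ω] := by
  rw [LinearIndependent.pair_iff]
  intro s t hst
  apply hE.indep s t
  have h : algebraMap F E s + algebraMap F E t * ω = s • (1 : E) + t • ω := by
    rw [Algebra.smul_def, Algebra.smul_def, mul_one]
  rw [h, hst]

/-- trace and norm of `a + b ω`. -/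
lemma trace_norm_formula (a b : F) :
    Algebra.trace F E (algebraMap F E a + algebraMap F E b * ω) =
      2 * a + b * Algebra.trace F E ω ∧
    Algebra.norm F (algebraMap F E a + algebraMap F E b * ω) =
      a ^ 2 + a * b * Algebra.trace F E ω + b ^ 2 * Algebra.norm F ω := by
  have hcard : Fintype.card (Fin 2) = Module.finrank F E := by
    simp [hE.finrank_two]
  set bb : Module.Basis (Fin 2) F E := basisOfLinearIndependentOfCardEqFinrank hE.li_pair hcard
    with hbbdef
  have hbb : ⇑bb = ![(1 : E), ω] := coe_basisOfLinearIndependentOfCardEqFinrank _ _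
  have hb0 : bb 0 = 1 := by rw [hbb]; rfl
  have hb1 : bb 1 = ω := by rw [hbb]; rfl
  have hrepr0 : ∀ u v : F, bb.repr (u • bb 0 + v • bb 1) 0 = u := by
    intro u v
    rw [map_add, map_smul, map_smul, bb.repr_self, bb.repr_self]
    simp
  have hrepr1 : ∀ u v : F, bb.repr (u • bb 0 + v • bb 1) 1 = v := by
    intro u v
    rw [map_add, map_smul, map_smul, bb.repr_self, bb.repr_self]
    simp
  have hcomb : ∀ u v : F, algebraMap F E u + algebraMap F E v * ω = u • bb 0 + v • bb 1 := by
    intro u v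
    rw [hb0, hb1, Algebra.smul_def, Algebra.smul_def, mul_one]
  have hω2 : ω * ω = (bb.repr (ω * ω) 0) • bb 0 + (bb.repr (ω * ω) 1) • bb 1 := by
    have := bb.sum_repr (ω * ω)
    rw [Fin.sum_univ_two] at this
    exact this.symm
  set c0 : F := bb.repr (ω * ω) 0
  set c1 : F := bb.repr (ω * ω) 1
  have key : ∀ u v : F,
      Algebra.trace F E (u • bb 0 + v • bb 1) = u + (u + v * c1) ∧
      Algebra.norm F (u • bb 0 + v • bb 1) = u * (u + v * c1) - (v * c0) * v := by
    intro u v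
    have hmul0 : (u • bb 0 + v • bb 1) * bb 0 = u • bb 0 + v • bb 1 := by
      rw [hb0, mul_one]
    have hmul1 : (u • bb 0 + v • bb 1) * bb 1 = (v * c0) • bb 0 + (u + v * c1) • bb 1 := by
      rw [hb0, hb1]
      have expand : (u • (1:E) + v • ω) * ω = u • ω + v • (ω * ω) := by
        rw [add_mul, smul_mul_assoc, smul_mul_assoc, one_mul]
      rw [hb0, hb1] at hω2
      rw [expand, hω2, smul_add, smul_smul, smul_smul]
      module
    have e00 : Algebra.leftMulMatrix bb (u • bb 0 + v • bb 1) 0 0 = u := by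
      rw [Algebra.leftMulMatrix_eq_repr_mul, hmul0, hrepr0]
    have e10 : Algebra.leftMulMatrix bb (u • bb 0 + v • bb 1) 1 0 = v := by
      rw [Algebra.leftMulMatrix_eq_repr_mul, hmul0, hrepr1]
    have e01 : Algebra.leftMulMatrix bb (u • bb 0 + v • bb 1) 0 1 = v * c0 := by
      rw [Algebra.leftMulMatrix_eq_repr_mul, hmul1, hrepr0]
    have e11 : Algebra.leftMulMatrix bb (u • bb 0 + v • bb 1) 1 1 = u + v * c1 := by
      rw [Algebra.leftMulMatrix_eq_repr_mul, hmul1, hrepr1]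
    constructor
    · rw [Algebra.trace_eq_matrix_trace bb, Matrix.trace_fin_two, e00, e11]
    · rw [Algebra.norm_eq_matrix_det bb, Matrix.det_fin_two, e00, e11, e01, e10]
  have hω' : ω = (0 : F) • bb 0 + (1 : F) • bb 1 := by rw [hb0, hb1]; simp
  have hTS := key 0 1
  rw [← hω'] at hTS
  have hc1 : c1 = Algebra.trace F E ω := by have h := hTS.1; rw [h]; ring
  have hc0 : c0 = -Algebra.norm F ω := by have h := hTS.2; rw [h]; ring
  have hk := key a b
  rw [← hcomb] at hk
  rw [hk.1, hk.2, hc1, hc0]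
  constructor <;> ring

lemma trace_of (a b : F) :
    Algebra.trace F E (algebraMap F E a + algebraMap F E b * ω) =
      2 * a + b * Algebra.trace F E ω := (hE.trace_norm_formula a b).1

lemma norm_of (a b : F) :
    Algebra.norm F (algebraMap F E a + algebraMap F E b * ω) =
      a ^ 2 + a * b * Algebra.trace F E ω + b ^ 2 * Algebra.norm F ω :=
  (hE.trace_norm_formula a b).2

end QuadAlgebraAxioms

namespace LocalFieldAxioms
variable (hF : LocalFieldAxioms O ord 2 q)
include hF

/-- residue squaring is surjective. -/
lemma sq_approx {u : F} (hu : u ∈ O) : ∃ m ∈ O, Vo ord (m * m - u) 1 := by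
  obtain ⟨Sf, hcard, hmem, hrep, huniq⟩ := hF.residue_card
  have hf : ∀ y ∈ Sf, ∃ z, z ∈ Sf ∧ (y * y - z = 0 ∨ 1 ≤ ord (y * y - z)) := by
    intro y hy
    obtain ⟨z, hz1, hz2⟩ := hrep (y * y) (O.mul_mem (hmem y hy) (hmem y hy))
    exact ⟨z, hz1, hz2⟩
  choose φ hφ1 hφ2 using hf
  have e1 : (1 : ℤ) ≤ ord (2 : F) := hF.ord_two_pos
  have hinj : ∀ a₁ a₂ ha₁ ha₂, φ a₁ ha₁ = φ a₂ ha₂ → a₁ = a₂ := by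
    intro a1 a2 ha1 ha2 heq
    apply huniq a1 ha1 a2 ha2
    have hV : Vo ord (a1 * a1 - a2 * a2) 1 := by
      have h1 : Vo ord (a1 * a1 - φ a1 ha1) 1 := hφ2 a1 ha1
      have h2 : Vo ord (a2 * a2 - φ a2 ha2) 1 := hφ2 a2 ha2
      have hh : a1 * a1 - a2 * a2 =
          (a1 * a1 - φ a1 ha1) - (a2 * a2 - φ a2 ha2) := by rw [heq]; ring
      rw [hh]; exact hF.Vo_sub h1 h2
    by_contra hne
    have hne' : a1 - a2 ≠ 0 ∧ ord (a1 - a2) < 1 := by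
      constructor
      · intro h0; exact hne (Or.inl h0)
      · by_contra h1; exact hne (Or.inr (by omega))
    have hmem12 : a1 - a2 ∈ O := O.sub_mem (hmem a1 ha1) (hmem a2 ha2)
    have hord0 : ord (a1 - a2) = 0 := by
      rcases hF.Vo_of_mem hmem12 with h0 | h1
      · exact absurd h0 hne'.1
      · omega
    have hsum : a1 + a2 ≠ 0 ∧ ord (a1 + a2) = 0 := by
      have h2a : Vo ord (2 * a2) (ord (a1 - a2) + 1) := by
        rw [hord0]
        have := hF.Vo_mul (x := (2:F)) (y := a2) (Or.inr e1) (hF.Vo_of_mem (hmem a2 ha2))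
        simpa using this
      have := hF.ord_add_eq_left hne'.1 h2a
      constructor
      · intro h0; exact this.1 (by rw [← h0]; ring)
      · have h' : a1 - a2 + 2 * a2 = a1 + a2 := by ring
        rw [h'] at this; omega
    have hprodne : (a1 - a2) * (a1 + a2) ≠ 0 := mul_ne_zero hne'.1 hsum.1
    have hprodord : ord ((a1 - a2) * (a1 + a2)) = 0 := by
      rw [hF.ord_mul _ _ hne'.1 hsum.1, hord0, hsum.2]; ring
    have hh2 : a1 * a1 - a2 * a2 = (a1 - a2) * (a1 + a2) := by ring
    rw [hh2] at hV
    rcases hV with h0 | h1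
    · exact hprodne h0
    · omega
  have hsurj := Finset.surj_on_of_inj_on_of_card_le (s := Sf) (t := Sf) φ hφ1 hinj le_rfl
  obtain ⟨ru, hru, hVuru⟩ := hrep u hu
  obtain ⟨m, hm, hmeq⟩ := hsurj ru hru
  refine ⟨m, hmem m hm, ?_⟩
  have h1 : Vo ord (m * m - ru) 1 := by rw [hmeq]; exact hφ2 m hm
  have h2 : Vo ord (ru - u) 1 := by
    have := hF.Vo_neg (x := u - ru) hVuru
    simpa using this
  have hh : m * m - u = (m * m - ru) + (ru - u) := by ring
  rw [hh]; exact hF.Vo_add h1 h2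

end LocalFieldAxioms

namespace QuadAlgebraAxioms
variable (hF : LocalFieldAxioms O ord 2 q) (hE : QuadAlgebraAxioms O ord E ω d ξ)
variable {π : F} (hπ : π ≠ 0 ∧ ord π = 1)
include hF hE hπ

lemma T_small (hd : 1 ≤ d) : Vo ord (Algebra.trace F E ω) 1 := by
  have htrO := hF.Vo_of_mem hE.trace_mem
  have hnmO := hF.Vo_of_mem hE.norm_mem
  have hdisc := hE.disc_ord
  have hdiscne := hE.disc_ne
  set T := Algebra.trace F E ω
  set S := Algebra.norm F ω
  by_contra h
  have hT : T ≠ 0 ∧ ord T < 1 := by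
    constructor
    · intro h0; exact h (Or.inl h0)
    · by_contra h1; exact h (Or.inr (by omega))
  have hT0 : ord T = 0 := by
    rcases htrO with h0 | h1
    · exact absurd h0 hT.1
    · omega
  have hT2 : ord (T ^ 2) = 0 := by rw [hF.ord_pow hT.1]; omega
  have h4 : Vo ord (4 : F) 2 := by
    refine Or.inr ?_
    rw [hF.ord_four]
    have := hF.ord_two_pos; omega
  have h4S : Vo ord (4 * S) (2 + 0) := hF.Vo_mul h4 hnmO
  have h4S1 : Vo ord (4 * S) 1 := hF.Vo_mono (by omega) h4S
  have hV : Vo ord (-(4 * S)) (ord (T ^ 2) + 1) := by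
    rw [hT2]; exact hF.Vo_neg h4S1
  have heq := hF.ord_add_eq_left (pow_ne_zero 2 hT.1) hV
  have hDeq : T ^ 2 + -(4 * S) = T ^ 2 - 4 * S := by ring
  rw [hDeq] at heq
  rw [heq.2] at hdisc
  omega

lemma max_order_step {b : F} (hb : b ∈ O) (hd : 1 ≤ d)
    (hnorm : Vo ord (b * b - b * Algebra.trace F E ω + Algebra.norm F ω) 2) : False := by
  set T := Algebra.trace F E ω with hT
  set S := Algebra.norm F ω with hS
  have e1 : (1 : ℤ) ≤ ord (2 : F) := hF.ord_two_pos
  set x := algebraMap F E (-b / π) + algebraMap F E (1 / π) * ω with hx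
  have htr : Algebra.trace F E x ∈ O := by
    rw [hx, hE.trace_of]
    have h1 : Vo ord (T - 2 * b) 1 := by
      have := hF.Vo_sub (hE.T_small hF hπ hd)
        (hF.Vo_mul (x := (2:F)) (Or.inr e1) (hF.Vo_of_mem hb))
      simpa using this
    apply hF.mem_of_Vo
    have hcomb : 2 * (-b / π) + 1 / π * T = (T - 2 * b) * π⁻¹ := by
      field_simp; ring
    rw [hcomb]
    have h2 : Vo ord (π⁻¹ : F) (-1) := by
      refine Or.inr ?_
      rw [hF.ord_inv hπ.1, hπ.2]
    have := hF.Vo_mul h1 h2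
    simpa using this
  have hnr : Algebra.norm F x ∈ O := by
    rw [hx, hE.norm_of]
    have hcomb : (-b / π) ^ 2 + (-b / π) * (1 / π) * T + (1 / π) ^ 2 * S =
        (b * b - b * T + S) * (π⁻¹ * π⁻¹) := by
      field_simp; ring
    rw [hcomb]
    apply hF.mem_of_Vo
    have h2 : Vo ord (π⁻¹ * π⁻¹ : F) (-2) := by
      have h1 : Vo ord (π⁻¹ : F) (-1) := Or.inr (by rw [hF.ord_inv hπ.1, hπ.2])
      have := hF.Vo_mul h1 h1
      exact hF.Vo_mono (by omega) this
    have := hF.Vo_mul hnorm h2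
    simpa using this
  obtain ⟨a2, b2, _, hb2, hxeq⟩ := hE.max_order x htr hnr
  have heq : algebraMap F E (-b / π - a2) + algebraMap F E (1 / π - b2) * ω = 0 := by
    have h1 : algebraMap F E (-b / π - a2) + algebraMap F E (1 / π - b2) * ω =
        (algebraMap F E (-b / π) + algebraMap F E (1 / π) * ω) -
          (algebraMap F E a2 + algebraMap F E b2 * ω) := by
      rw [map_sub, map_sub]; ring
    rw [h1, ← hx, hxeq]; ring
  have h2 := (hE.indep _ _ heq).2
  have hb2' : b2 = π⁻¹ := by
    have : (1 : F) / π = π⁻¹ := one_div π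
    rw [this] at h2; exact (sub_eq_zero.mp h2).symm
  rw [hb2'] at hb2
  rcases hF.Vo_of_mem hb2 with h0 | h1
  · exact inv_ne_zero hπ.1 h0
  · rw [hF.ord_inv hπ.1, hπ.2] at h1; omega

lemma norm_shift (hd : 1 ≤ d) {b : F} (hb : b ∈ O) :
    b * b - b * Algebra.trace F E ω + Algebra.norm F ω ≠ 0 ∧
    ord (b * b - b * Algebra.trace F E ω + Algebra.norm F ω) ≤ 1 := by
  constructor
  · intro h0
    exact hE.max_order_step hF hπ hb hd (Or.inl h0)
  · by_contra h1
    push_neg at h1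
    by_cases h0 : b * b - b * Algebra.trace F E ω + Algebra.norm F ω = 0
    · exact hE.max_order_step hF hπ hb hd (Or.inl h0)
    · exact hE.max_order_step hF hπ hb hd (Or.inr (by omega))

lemma exists_normalizer (hd : 1 ≤ d) :
    ∃ m ∈ O, m * m - m * Algebra.trace F E ω + Algebra.norm F ω ≠ 0 ∧
      ord (m * m - m * Algebra.trace F E ω + Algebra.norm F ω) = 1 := by
  have hTsmall := hE.T_small hF hπ hd
  set T := Algebra.trace F E ω
  set S := Algebra.norm F ω
  obtain ⟨m, hm, hVm⟩ := hF.sq_approx (u := -S) (O.neg_mem hE.norm_mem)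
  refine ⟨m, hm, ?_⟩
  have hV1 : Vo ord (m * m - m * T + S) 1 := by
    have h1 : Vo ord (m * m + S) 1 := by
      have hh : m * m + S = m * m - (-S) := by ring
      rw [hh]; exact hVm
    have h2 : Vo ord (m * T) 1 := by
      have := hF.Vo_mul (hF.Vo_of_mem hm) hTsmall
      simpa using this
    have hh : m * m - m * T + S = (m * m + S) - m * T := by ring
    rw [hh]; exact hF.Vo_sub h1 h2
  have hns := hE.norm_shift hF hπ hd hm
  have hbr : m * m - m * Algebra.trace F E ω + Algebra.norm F ω = m * m - m * T + S := rfl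
  rw [hbr] at hns
  refine ⟨hns.1, ?_⟩
  rcases hV1 with h0 | h1
  · exact absurd h0 hns.1
  · omega

/-- normalization data in the even ramified case. -/
lemma ram_even_data (g : ℕ) (hg1 : 1 ≤ g) (hge : (g : ℤ) ≤ ord (2 : F)) (hd : d = 2 * g) :
    ∃ m ∈ O,
      (m * m - m * Algebra.trace F E ω + Algebra.norm F ω ≠ 0 ∧
       ord (m * m - m * Algebra.trace F E ω + Algebra.norm F ω) = 1) ∧
      (Algebra.trace F E ω - 2 * m ≠ 0 ∧
       ord (Algebra.trace F E ω - 2 * m) = g) := by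
  set T := Algebra.trace F E ω
  set S := Algebra.norm F ω
  obtain ⟨m, hm, hS'ne, hS'ord⟩ := hE.exists_normalizer hF hπ (by omega)
  set S' := m * m - m * T + S with hS'
  set T' := T - 2 * m with hT'
  have hDid : T' ^ 2 - 4 * S' = T ^ 2 - 4 * S := by rw [hT', hS']; ring
  have h4S' : (4 * S' : F) ≠ 0 ∧ ord (4 * S') = 2 * ord (2 : F) + 1 := by
    constructor
    · exact mul_ne_zero (hF.four_ne) hS'ne
    · rw [hF.ord_mul _ _ hF.four_ne hS'ne, hF.ord_four, hS'ord]
  have hDord : ord (T ^ 2 - 4 * S) = 2 * g := by rw [hE.disc_ord, hd]; push_cast; ring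
  refine ⟨m, hm, ⟨hS'ne, hS'ord⟩, ?_⟩
  have hT'ne : T' ≠ 0 := by
    intro h0
    have : T ^ 2 - 4 * S = -(4 * S') := by rw [← hDid, h0]; ring
    rw [this] at hDord
    have : ord (-(4 * S')) = 2 * ord (2:F) + 1 := by
      rw [hF.ord_neg h4S'.1, h4S'.2]
    omega
  have hsq : T' ^ 2 = (T ^ 2 - 4 * S) + 4 * S' := by rw [← hDid]; ring
  have hDne : T ^ 2 - 4 * S ≠ 0 := hE.disc_ne
  have := hF.ord_add_eq_left hDne (Or.inr (by rw [h4S'.2, hDord]; omega))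
  rw [← hsq] at this
  have h2 : ord (T' ^ 2) = 2 * ord T' := by rw [hF.ord_pow hT'ne]; ring
  have hbr : ord (T - 2 * m) = ord T' := rfl
  exact ⟨hT'ne, by omega⟩

/-- normalization data in the odd ramified case. -/
lemma ram_odd_data (hd : (d : ℤ) = 2 * ord (2 : F) + 1) :
    ∃ m ∈ O,
      (m * m - m * Algebra.trace F E ω + Algebra.norm F ω ≠ 0 ∧
       ord (m * m - m * Algebra.trace F E ω + Algebra.norm F ω) = 1) ∧
      Vo ord (Algebra.trace F E ω - 2 * m) (ord (2 : F) + 1) := by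
  set T := Algebra.trace F E ω
  set S := Algebra.norm F ω
  have e1 : (1 : ℤ) ≤ ord (2 : F) := hF.ord_two_pos
  have hd1 : 1 ≤ d := by omega
  obtain ⟨m, hm, hS'ne, hS'ord⟩ := hE.exists_normalizer hF hπ hd1
  set S' := m * m - m * T + S with hS'
  set T' := T - 2 * m with hT'
  have hDid : T' ^ 2 - 4 * S' = T ^ 2 - 4 * S := by rw [hT', hS']; ring
  refine ⟨m, hm, ⟨hS'ne, hS'ord⟩, ?_⟩
  by_cases hT'ne : T' = 0
  · exact Or.inl hT'ne
  refine Or.inr ?_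
  have h4S' : (4 * S' : F) ≠ 0 ∧ ord (4 * S') = 2 * ord (2 : F) + 1 := by
    constructor
    · exact mul_ne_zero (hF.four_ne) hS'ne
    · rw [hF.ord_mul _ _ hF.four_ne hS'ne, hF.ord_four, hS'ord]
  have hDord : ord (T ^ 2 - 4 * S) = 2 * ord (2:F) + 1 := by rw [hE.disc_ord]; omega
  have hsq : T' ^ 2 = (T ^ 2 - 4 * S) + 4 * S' := by rw [← hDid]; ring
  have hmin := hF.min_le_ord_add (T ^ 2 - 4 * S) (4 * S') hE.disc_ne h4S'.1
    (by rw [← hsq]; exact pow_ne_zero 2 hT'ne)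
  rw [← hsq] at hmin
  have h2 : ord (T' ^ 2) = 2 * ord T' := by rw [hF.ord_pow hT'ne]; ring
  have hbr : ord (T - 2 * m) = ord T' := rfl
  omega

/-- in the unramified/split case `T` is a unit. -/
lemma unram_T (hd : d = 0) :
    Algebra.trace F E ω ≠ 0 ∧ ord (Algebra.trace F E ω) = 0 := by
  have htrO := hF.Vo_of_mem hE.trace_mem
  have hnmO := hF.Vo_of_mem hE.norm_mem
  have hdiscne := hE.disc_ne
  have hDord : ord ((Algebra.trace F E ω) ^ 2 - 4 * (Algebra.norm F ω)) = 0 := by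
    rw [hE.disc_ord, hd]; rfl
  set T := Algebra.trace F E ω
  set S := Algebra.norm F ω
  have e1 : (1 : ℤ) ≤ ord (2 : F) := hF.ord_two_pos
  by_contra h
  have hVT : Vo ord T 1 := by
    rcases htrO with h0 | h1
    · exact Or.inl h0
    · by_cases h0 : T = 0
      · exact Or.inl h0
      · refine Or.inr ?_
        by_contra h2
        exact h ⟨h0, by omega⟩
  have hV : Vo ord (T ^ 2 - 4 * S) 2 := by
    have h1 : Vo ord (T ^ 2) 2 := by
      have := hF.Vo_mul hVT hVT
      have hh : T ^ 2 = T * T := sq T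
      rw [hh]; exact this
    have h2 : Vo ord (4 * S) 2 := by
      have h4 : Vo ord (4 : F) 2 := Or.inr (by rw [hF.ord_four]; omega)
      have := hF.Vo_mul h4 hnmO
      simpa using this
    exact hF.Vo_sub h1 h2
  rcases hV with h0 | h1
  · exact hdiscne h0
  · omega

end QuadAlgebraAxioms

lemma admA {e A3 : ℕ} (he1 : 1 ≤ e) (hA3 : 2*e ≤ A3) :
    IsAdmissible (![0, 2*e, A3, A3 + 2*e]) (![1,0,3,2] : Fin 4 → Fin 4) := by
  have hσ : ∀ i : Fin 4, (![1,0,3,2] : Fin 4 → Fin 4) i ≠ i := by decide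
  refine ⟨?_, by decide, ?_, ?_, ?_, ?_, ?_, ?_, ?_⟩
  · intro i j hij
    fin_cases i <;> fin_cases j <;> simp_all <;> omega
  · intro i j k hi; exact absurd hi (hσ i)
  · intro i j hi; exact absurd hi (hσ i)
  · intro i hi; exact absurd hi (hσ i)
  · intro i j h1 h2 h3
    fin_cases i <;> fin_cases j <;> simp_all <;> omega
  · intro i j h1 h2 h3
    rcases h2 with h2|h2; swap; · exact absurd h2 (hσ i)
    rcases h3 with h3|h3; swap; · exact absurd h3 (hσ j)
    fin_cases i <;> fin_cases j <;> simp_all <;> omega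
  · intro i hi
    constructor
    · fin_cases i <;> simp_all <;> omega
    · intro j hj1 hj2 hj3
      fin_cases i <;> fin_cases j <;> simp at hj1 hj2 hj3 ⊢ <;> omega
  · intro i hi j hj1 hj2 hj3
    fin_cases i <;> fin_cases j <;> simp at hi hj1 hj2 hj3 ⊢ <;> omega

lemma admB {h : ℕ} (hh : 1 ≤ h) :
    IsAdmissible (![0, h, h, 2*h]) (![3,2,1,0] : Fin 4 → Fin 4) := by
  have hσ : ∀ i : Fin 4, (![3,2,1,0] : Fin 4 → Fin 4) i ≠ i := by decide
  refine ⟨?_, by decide, ?_, ?_, ?_, ?_, ?_, ?_, ?_⟩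
  · intro i j hij
    fin_cases i <;> fin_cases j <;> simp_all <;> omega
  · intro i j k hi; exact absurd hi (hσ i)
  · intro i j hi; exact absurd hi (hσ i)
  · intro i hi; exact absurd hi (hσ i)
  · intro i j h1 h2 h3
    fin_cases i <;> fin_cases j <;> simp_all <;> omega
  · intro i j h1 h2 h3
    rcases h2 with h2|h2; swap; · exact absurd h2 (hσ i)
    rcases h3 with h3|h3; swap; · exact absurd h3 (hσ j)
    fin_cases i <;> fin_cases j <;> simp_all <;> omega
  · intro i hi
    constructor
    · fin_cases i <;> simp_all <;> omega
    · intro j hj1 hj2 hj3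
      fin_cases i <;> fin_cases j <;> simp at hj1 hj2 hj3 ⊢ <;> omega
  · intro i hi j hj1 hj2 hj3
    fin_cases i <;> fin_cases j <;> simp at hi hj1 hj2 hj3 ⊢ <;> omega

lemma admC1 {f g : ℕ} (hg : 1 ≤ g) (hfg : f + 1 ≤ g) :
    IsAdmissible (![0, 2*f+1, 2*g-1, 2*g+2*f]) (![3,2,1,0] : Fin 4 → Fin 4) := by
  have hσ : ∀ i : Fin 4, (![3,2,1,0] : Fin 4 → Fin 4) i ≠ i := by decide
  refine ⟨?_, by decide, ?_, ?_, ?_, ?_, ?_, ?_, ?_⟩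
  · intro i j hij
    fin_cases i <;> fin_cases j <;> simp_all <;> omega
  · intro i j k hi; exact absurd hi (hσ i)
  · intro i j hi; exact absurd hi (hσ i)
  · intro i hi; exact absurd hi (hσ i)
  · intro i j h1 h2 h3
    fin_cases i <;> fin_cases j <;> simp_all <;> omega
  · intro i j h1 h2 h3
    rcases h2 with h2|h2; swap; · exact absurd h2 (hσ i)
    rcases h3 with h3|h3; swap; · exact absurd h3 (hσ j)
    fin_cases i <;> fin_cases j <;> simp_all <;> omega
  · intro i hi
    constructor
    · fin_cases i <;> simp_all <;> omega
    · intro j hj1 hj2 hj3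
      fin_cases i <;> fin_cases j <;> simp at hj1 hj2 hj3 ⊢ <;> omega
  · intro i hi j hj1 hj2 hj3
    fin_cases i <;> fin_cases j <;> simp at hi hj1 hj2 hj3 ⊢ <;> omega

lemma admC2 {f e : ℕ} (hfe : f < e) :
    IsAdmissible (![0, 2*f+1, 2*e, 2*e+2*f+1]) (![2,3,0,1] : Fin 4 → Fin 4) := by
  have hσ : ∀ i : Fin 4, (![2,3,0,1] : Fin 4 → Fin 4) i ≠ i := by decide
  refine ⟨?_, by decide, ?_, ?_, ?_, ?_, ?_, ?_, ?_⟩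
  · intro i j hij
    fin_cases i <;> fin_cases j <;> simp_all <;> omega
  · intro i j k hi; exact absurd hi (hσ i)
  · intro i j hi; exact absurd hi (hσ i)
  · intro i hi; exact absurd hi (hσ i)
  · intro i j h1 h2 h3
    fin_cases i <;> fin_cases j <;> simp_all <;> omega
  · intro i j h1 h2 h3
    rcases h2 with h2|h2; swap; · exact absurd h2 (hσ i)
    rcases h3 with h3|h3; swap; · exact absurd h3 (hσ j)
    fin_cases i <;> fin_cases j <;> simp_all <;> omega
  · intro i hi
    constructor
    · fin_cases i <;> simp_all <;> omega
    · intro j hj1 hj2 hj3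
      fin_cases i <;> fin_cases j <;> simp at hj1 hj2 hj3 ⊢ <;> omega
  · intro i hi j hj1 hj2 hj3
    fin_cases i <;> fin_cases j <;> simp at hi hj1 hj2 hj3 ⊢ <;> omega

lemma admD : IsAdmissible (![0, 0, 0, 0] : Fin 4 → ℕ) (![1,0,3,2] : Fin 4 → Fin 4) := by
  have hσ : ∀ i : Fin 4, (![1,0,3,2] : Fin 4 → Fin 4) i ≠ i := by decide
  refine ⟨?_, by decide, ?_, ?_, ?_, ?_, ?_, ?_, ?_⟩
  · intro i j hij
    fin_cases i <;> fin_cases j <;> simp_all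
  · intro i j k hi; exact absurd hi (hσ i)
  · intro i j hi; exact absurd hi (hσ i)
  · intro i hi; exact absurd hi (hσ i)
  · intro i j h1 h2 h3
    fin_cases i <;> fin_cases j <;> simp_all
  · intro i j h1 h2 h3
    rcases h2 with h2|h2; swap; · exact absurd h2 (hσ i)
    rcases h3 with h3|h3; swap; · exact absurd h3 (hσ j)
    fin_cases i <;> fin_cases j <;> simp_all
  · intro i hi
    constructor
    · fin_cases i <;> simp_all
    · intro j hj1 hj2 hj3
      fin_cases i <;> fin_cases j <;> simp at hj1 hj2 hj3 ⊢
  · intro i hi j hj1 hj2 hj3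
    fin_cases i <;> fin_cases j <;> simp at hi hj1 hj2 hj3 ⊢

lemma shapeA (hF : LocalFieldAxioms O ord 2 q) {e A3 : ℕ}
    (he : ord (2 : F) = (e : ℤ)) (he1 : 1 ≤ e) (hA3 : 2 * e ≤ A3)
    {t : F} (ht0 : t ≠ 0) (htord : ord t = (A3 : ℤ))
    {M : Matrix (Fin 4) (Fin 4) F}
    (hM : M = !![1,1,0,0; 1,0,0,0; 0,0,t,t; 0,0,t,0]) (hdet : M.det ≠ 0) :
    IsReducedForm O ord M ![0, 2*e, A3, A3+2*e] ![1,0,3,2] := by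
  subst hM
  have h2 := hF.two_ne
  have h1O : (1:F) ∈ O := O.one_mem
  have h0O : (0:F) ∈ O := O.zero_mem
  have htO : t ∈ O := hF.mem_of_Vo (Or.inr (by omega))
  have h2O : (2:F) ∈ O := hF.mem_of_Vo (Or.inr (by omega))
  have h2t : ord (2*t) = (e : ℤ) + A3 := by rw [hF.ord_mul _ _ h2 ht0, he, htord]
  have h2tne : (2*t : F) ≠ 0 := mul_ne_zero h2 ht0
  have hone := hF.ord_one
  have hadm := admA he1 hA3
  refine ⟨⟨?_, ?_, ?_⟩, hdet, ⟨hadm.1, ?_, ?_⟩, hadm, ?_, ?_, ?_⟩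
  · show _ = _
    ext i j
    fin_cases i <;> fin_cases j <;> rfl
  · intro i
    fin_cases i
    exacts [h1O, h0O, htO, h0O]
  · intro i j
    fin_cases i <;> fin_cases j <;>
      exact O.mul_mem h2O (by first | exact h1O | exact h0O | exact htO)
  · -- InS diagonal
    intro i
    fin_cases i <;> simp [hone, htord, Matrix.vecHead, Matrix.vecTail, Function.comp]
  · -- InS off-diagonal
    intro i j
    fin_cases i <;> fin_cases j <;>
        simp [he, h2t, hone, Matrix.vecHead, Matrix.vecTail, Function.comp] <;>
      first
      | omega
      | (refine Or.inr ?_; omega)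
  · -- exact pair entries
    intro i hi
    fin_cases i <;>
      refine ⟨by simp [h2, h2tne, Matrix.vecHead, Matrix.vecTail, Function.comp], ?_⟩ <;>
        simp [he, h2t, Matrix.vecHead, Matrix.vecTail, Function.comp] <;> omega
  · -- exact diagonal entries
    intro i hi
    fin_cases i
    · exact ⟨one_ne_zero, by simp [hone]⟩
    · exfalso; rcases hi with h|h
      · exact absurd h (by decide)
      · simp at h
    · exact ⟨ht0, by simp [htord, Matrix.vecHead, Matrix.vecTail, Function.comp]⟩
    · exfalso; rcases hi with h|h
      · exact absurd h (by decide)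
      · simp at h
  · -- strict off entries
    intro i j h1 h2'
    fin_cases i <;> fin_cases j <;>
      first
      | (exact absurd rfl h1)
      | (exact absurd (by decide) h2')
      | (refine Or.inl ?_; simp [Matrix.vecHead, Matrix.vecTail, Function.comp])

lemma shapeB (hF : LocalFieldAxioms O ord 2 q) {e h : ℕ}
    (he : ord (2 : F) = (e : ℤ)) (hh1 : 1 ≤ h) (hh2e : h < 2 * e)
    {τ s : F} (hτ : τ ≠ 0) (hτord : ord τ = (h : ℤ))
    (hsVo : Vo ord s (h : ℤ))
    (hs3 : 2 * s = 0 ∨ 3 * (h : ℤ) < 2 * ord (2 * s))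
    {M : Matrix (Fin 4) (Fin 4) F}
    (hM : M = !![1, 1, τ/2, τ/2; 1, 0, τ/2, 0; τ/2, τ/2, s, s; τ/2, 0, s, 0])
    (hdet : M.det ≠ 0) :
    IsReducedForm O ord M ![0, h, h, 2*h] ![3,2,1,0] := by
  subst hM
  have h2 := hF.two_ne
  have h1O : (1:F) ∈ O := O.one_mem
  have h0O : (0:F) ∈ O := O.zero_mem
  have hτO : τ ∈ O := hF.mem_of_Vo (Or.inr (by omega))
  have hsO : s ∈ O := hF.mem_of_Vo (hF.Vo_mono (by omega) hsVo)
  have h2O : (2:F) ∈ O := hF.mem_of_Vo (Or.inr (by omega))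
  have hcan : 2 * (τ/2) = τ := by field_simp
  have hτ2O : 2 * (τ/2) ∈ O := by rw [hcan]; exact hτO
  have hone := hF.ord_one
  have h21 : ord (2 * (1:F)) = (e : ℤ) := by rw [mul_one, he]
  have hτ2 : ord (2 * (τ/2)) = (h : ℤ) := by rw [hcan, hτord]
  have Hτ : ∀ u v : ℕ, ((u:ℤ) + v ≤ 2 * (h:ℤ)) →
      (2 * (τ/2) = 0 ∨ (u:ℤ) + (v:ℤ) ≤ 2 * ord (2 * (τ/2))) :=
    fun u v huv => Or.inr (by rw [hτ2]; omega)
  have H1 : ∀ u v : ℕ, ((u:ℤ) + v ≤ 2 * (e:ℤ)) →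
      (2 * (1:F) = 0 ∨ (u:ℤ) + (v:ℤ) ≤ 2 * ord (2 * (1:F))) :=
    fun u v huv => Or.inr (by rw [h21]; omega)
  have H0 : ∀ u v : ℕ, (2 * (0:F) = 0 ∨ (u:ℤ) + (v:ℤ) ≤ 2 * ord (2 * (0:F))) :=
    fun u v => Or.inl (mul_zero 2)
  have Hs : ∀ u v : ℕ, ((u:ℤ) + v ≤ 3 * (h:ℤ)) →
      (2 * s = 0 ∨ (u:ℤ) + (v:ℤ) ≤ 2 * ord (2 * s)) := by
    intro u v huv
    rcases hs3 with h0 | h1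
    · exact Or.inl h0
    · exact Or.inr (by omega)
  have Sτ : ∀ u v : ℕ, ((u:ℤ) + v < 2 * (h:ℤ)) →
      (2 * (τ/2) = 0 ∨ (u:ℤ) + (v:ℤ) < 2 * ord (2 * (τ/2))) :=
    fun u v huv => Or.inr (by rw [hτ2]; omega)
  have S1 : ∀ u v : ℕ, ((u:ℤ) + v < 2 * (e:ℤ)) →
      (2 * (1:F) = 0 ∨ (u:ℤ) + (v:ℤ) < 2 * ord (2 * (1:F))) :=
    fun u v huv => Or.inr (by rw [h21]; omega)
  have S0 : ∀ u v : ℕ, (2 * (0:F) = 0 ∨ (u:ℤ) + (v:ℤ) < 2 * ord (2 * (0:F))) :=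
    fun u v => Or.inl (mul_zero 2)
  have Ss : ∀ u v : ℕ, ((u:ℤ) + v ≤ 3 * (h:ℤ)) →
      (2 * s = 0 ∨ (u:ℤ) + (v:ℤ) < 2 * ord (2 * s)) := by
    intro u v huv
    rcases hs3 with h0 | h1
    · exact Or.inl h0
    · exact Or.inr (by omega)
  have Pτ : ∀ u v : ℕ, ((u:ℤ) + v = 2 * (h:ℤ)) →
      (2 * (τ/2) ≠ 0 ∧ 2 * ord (2 * (τ/2)) = (u:ℤ) + (v:ℤ)) :=
    fun u v huv => ⟨by rw [hcan]; exact hτ, by rw [hτ2]; omega⟩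
  have I1F : (1:F) = 0 ∨ ((0:ℕ):ℤ) ≤ ord (1:F) := Or.inr (by rw [hone]; norm_num)
  have D0 : (1:F) ≠ 0 ∧ ord (1:F) = ((0:ℕ):ℤ) := ⟨one_ne_zero, by rw [hone]; norm_num⟩
  have hadm := admB (h := h) hh1
  refine ⟨⟨?_, ?_, ?_⟩, hdet, ⟨hadm.1, ?_, ?_⟩, hadm, ?_, ?_, ?_⟩
  · show _ = _
    ext i j
    fin_cases i <;> fin_cases j <;> rfl
  · intro i
    fin_cases i
    exacts [h1O, h0O, hsO, h0O]
  · intro i j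
    fin_cases i <;> fin_cases j
    exacts [O.mul_mem h2O h1O, O.mul_mem h2O h1O, hτ2O, hτ2O,
      O.mul_mem h2O h1O, O.mul_mem h2O h0O, hτ2O, O.mul_mem h2O h0O,
      hτ2O, hτ2O, O.mul_mem h2O hsO, O.mul_mem h2O hsO,
      hτ2O, O.mul_mem h2O h0O, O.mul_mem h2O hsO, O.mul_mem h2O h0O]
  · intro i
    fin_cases i
    exacts [I1F, Or.inl rfl, hsVo, Or.inl rfl]
  · intro i j
    fin_cases i <;> fin_cases j
    exacts [H1 0 0 (by omega), H1 0 h (by omega), Hτ 0 h (by omega), Hτ 0 (2*h) (by omega),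
      H1 h 0 (by omega), H0 h h, Hτ h h (by omega), H0 h (2*h),
      Hτ h 0 (by omega), Hτ h h (by omega), Hs h h (by omega), Hs h (2*h) (by omega),
      Hτ (2*h) 0 (by omega), H0 (2*h) h, Hs (2*h) h (by omega), H0 (2*h) (2*h)]
  · intro i hi
    fin_cases i
    exacts [Pτ 0 (2*h) (by omega), Pτ h h (by omega), Pτ h h (by omega), Pτ (2*h) 0 (by omega)]
  · intro i hi
    fin_cases i
    · exact D0
    · exfalso; rcases hi with h'|h'
      · exact absurd h' (by decide)
      · exact absurd h' (show ¬((h:ℕ) < h) by omega)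
    · exfalso; rcases hi with h'|h'
      · exact absurd h' (by decide)
      · exact absurd h' (show ¬((h:ℕ) < h) by omega)
    · exfalso; rcases hi with h'|h'
      · exact absurd h' (by decide)
      · exact absurd h' (show ¬((2*h:ℕ) < 0) by omega)
  · intro i j h1 h2'
    fin_cases i <;> fin_cases j <;>
      first
      | exact absurd rfl h1
      | exact absurd (by decide) h2'
      | exact S1 0 h (by omega)
      | exact S1 h 0 (by omega)
      | exact Sτ 0 h (by omega)
      | exact Sτ h 0 (by omega)
      | exact S0 h (2*h)
      | exact S0 (2*h) h
      | exact Ss h (2*h) (by omega)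
      | exact Ss (2*h) h (by omega)

lemma shapeC1 (hF : LocalFieldAxioms O ord 2 q) {e f g : ℕ}
    (he : ord (2 : F) = (e : ℤ)) (hg1 : 1 ≤ g) (hge : g ≤ e) (hfg : f + 1 ≤ g)
    {τ s : F} (hτ : τ ≠ 0) (hτord : ord τ = (f : ℤ) + g)
    (hs : s ≠ 0) (hsord : ord s = 2 * (f : ℤ) + 1)
    {M : Matrix (Fin 4) (Fin 4) F}
    (hM : M = !![1, τ/2, 1, τ/2; τ/2, s, τ/2, s; 1, τ/2, 0, 0; τ/2, s, 0, 0])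
    (hdet : M.det ≠ 0) :
    IsReducedForm O ord M ![0, 2*f+1, 2*g-1, 2*g+2*f] ![3,2,1,0] := by
  subst hM
  have h2 := hF.two_ne
  have h1O : (1:F) ∈ O := O.one_mem
  have h0O : (0:F) ∈ O := O.zero_mem
  have hτO : τ ∈ O := hF.mem_of_Vo (Or.inr (by omega))
  have hsO : s ∈ O := hF.mem_of_Vo (Or.inr (by omega))
  have h2O : (2:F) ∈ O := hF.mem_of_Vo (Or.inr (by omega))
  have hcan : 2 * (τ/2) = τ := by field_simp
  have hτ2O : 2 * (τ/2) ∈ O := by rw [hcan]; exact hτO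
  have hone := hF.ord_one
  have h21 : ord (2 * (1:F)) = (e : ℤ) := by rw [mul_one, he]
  have hτ2 : ord (2 * (τ/2)) = (f : ℤ) + g := by rw [hcan, hτord]
  have h2s : ord (2 * s) = (e : ℤ) + (2 * (f:ℤ) + 1) := by
    rw [hF.ord_mul _ _ h2 hs, he, hsord]
  have h2sne : (2*s : F) ≠ 0 := mul_ne_zero h2 hs
  have Hτ : ∀ u v : ℕ, ((u:ℤ) + v ≤ 2 * ((f:ℤ) + g)) →
      (2 * (τ/2) = 0 ∨ (u:ℤ) + (v:ℤ) ≤ 2 * ord (2 * (τ/2))) :=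
    fun u v huv => Or.inr (by rw [hτ2]; omega)
  have H1 : ∀ u v : ℕ, ((u:ℤ) + v ≤ 2 * (e:ℤ)) →
      (2 * (1:F) = 0 ∨ (u:ℤ) + (v:ℤ) ≤ 2 * ord (2 * (1:F))) :=
    fun u v huv => Or.inr (by rw [h21]; omega)
  have H0 : ∀ u v : ℕ, (2 * (0:F) = 0 ∨ (u:ℤ) + (v:ℤ) ≤ 2 * ord (2 * (0:F))) :=
    fun u v => Or.inl (mul_zero 2)
  have Hs : ∀ u v : ℕ, ((u:ℤ) + v ≤ 2*(e:ℤ) + 4*(f:ℤ) + 2) →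
      (2 * s = 0 ∨ (u:ℤ) + (v:ℤ) ≤ 2 * ord (2 * s)) :=
    fun u v huv => Or.inr (by rw [h2s]; omega)
  have Sτ : ∀ u v : ℕ, ((u:ℤ) + v < 2 * ((f:ℤ) + g)) →
      (2 * (τ/2) = 0 ∨ (u:ℤ) + (v:ℤ) < 2 * ord (2 * (τ/2))) :=
    fun u v huv => Or.inr (by rw [hτ2]; omega)
  have S1 : ∀ u v : ℕ, ((u:ℤ) + v < 2 * (e:ℤ)) →
      (2 * (1:F) = 0 ∨ (u:ℤ) + (v:ℤ) < 2 * ord (2 * (1:F))) :=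
    fun u v huv => Or.inr (by rw [h21]; omega)
  have S0 : ∀ u v : ℕ, (2 * (0:F) = 0 ∨ (u:ℤ) + (v:ℤ) < 2 * ord (2 * (0:F))) :=
    fun u v => Or.inl (mul_zero 2)
  have Ss : ∀ u v : ℕ, ((u:ℤ) + v < 2*(e:ℤ) + 4*(f:ℤ) + 2) →
      (2 * s = 0 ∨ (u:ℤ) + (v:ℤ) < 2 * ord (2 * s)) :=
    fun u v huv => Or.inr (by rw [h2s]; omega)
  have Pτ : ∀ u v : ℕ, ((u:ℤ) + v = 2 * ((f:ℤ) + g)) →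
      (2 * (τ/2) ≠ 0 ∧ 2 * ord (2 * (τ/2)) = (u:ℤ) + (v:ℤ)) :=
    fun u v huv => ⟨by rw [hcan]; exact hτ, by rw [hτ2]; omega⟩
  have I1F : (1:F) = 0 ∨ ((0:ℕ):ℤ) ≤ ord (1:F) := Or.inr (by rw [hone]; norm_num)
  have D0 : (1:F) ≠ 0 ∧ ord (1:F) = ((0:ℕ):ℤ) := ⟨one_ne_zero, by rw [hone]; norm_num⟩
  have ISd : s = 0 ∨ ((2*f+1:ℕ):ℤ) ≤ ord s := Or.inr (by rw [hsord]; push_cast; omega)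
  have Ds : s ≠ 0 ∧ ord s = ((2*f+1:ℕ):ℤ) := ⟨hs, by rw [hsord]; push_cast; ring⟩
  have hadm := admC1 (f := f) (g := g) hg1 hfg
  refine ⟨⟨?_, ?_, ?_⟩, hdet, ⟨hadm.1, ?_, ?_⟩, hadm, ?_, ?_, ?_⟩
  · show _ = _
    ext i j
    fin_cases i <;> fin_cases j <;> rfl
  · intro i
    fin_cases i
    exacts [h1O, hsO, h0O, h0O]
  · intro i j
    fin_cases i <;> fin_cases j
    exacts [O.mul_mem h2O h1O, hτ2O, O.mul_mem h2O h1O, hτ2O,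
      hτ2O, O.mul_mem h2O hsO, hτ2O, O.mul_mem h2O hsO,
      O.mul_mem h2O h1O, hτ2O, O.mul_mem h2O h0O, O.mul_mem h2O h0O,
      hτ2O, O.mul_mem h2O hsO, O.mul_mem h2O h0O, O.mul_mem h2O h0O]
  · intro i
    fin_cases i
    exacts [I1F, ISd, Or.inl rfl, Or.inl rfl]
  · intro i j
    fin_cases i <;> fin_cases j
    exacts [H1 0 0 (by omega), Hτ 0 (2*f+1) (by omega), H1 0 (2*g-1) (by omega),
        Hτ 0 (2*g+2*f) (by omega),
      Hτ (2*f+1) 0 (by omega), Hs (2*f+1) (2*f+1) (by omega), Hτ (2*f+1) (2*g-1) (by omega),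
        Hs (2*f+1) (2*g+2*f) (by omega),
      H1 (2*g-1) 0 (by omega), Hτ (2*g-1) (2*f+1) (by omega), H0 (2*g-1) (2*g-1),
        H0 (2*g-1) (2*g+2*f),
      Hτ (2*g+2*f) 0 (by omega), Hs (2*g+2*f) (2*f+1) (by omega), H0 (2*g+2*f) (2*g-1),
        H0 (2*g+2*f) (2*g+2*f)]
  · intro i hi
    fin_cases i
    exacts [Pτ 0 (2*g+2*f) (by omega), Pτ (2*f+1) (2*g-1) (by omega),
      Pτ (2*g-1) (2*f+1) (by omega), Pτ (2*g+2*f) 0 (by omega)]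
  · intro i hi
    fin_cases i
    · exact D0
    · exact Ds
    · exfalso; rcases hi with h'|h'
      · exact absurd h' (by decide)
      · exact absurd h' (show ¬((2*g-1:ℕ) < 2*f+1) by omega)
    · exfalso; rcases hi with h'|h'
      · exact absurd h' (by decide)
      · exact absurd h' (show ¬((2*g+2*f:ℕ) < 0) by omega)
  · intro i j h1 h2'
    fin_cases i <;> fin_cases j <;>
      first
      | exact absurd rfl h1
      | exact absurd (by decide) h2'
      | exact Sτ 0 (2*f+1) (by omega)
      | exact Sτ (2*f+1) 0 (by omega)
      | exact S1 0 (2*g-1) (by omega)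
      | exact S1 (2*g-1) 0 (by omega)
      | exact Ss (2*f+1) (2*g+2*f) (by omega)
      | exact Ss (2*g+2*f) (2*f+1) (by omega)
      | exact S0 (2*g-1) (2*g+2*f)
      | exact S0 (2*g+2*f) (2*g-1)

lemma shapeC2 (hF : LocalFieldAxioms O ord 2 q) {e f : ℕ}
    (he : ord (2 : F) = (e : ℤ)) (he1 : 1 ≤ e) (hfe : f < e)
    {τ s : F} (hτV : Vo ord τ ((e:ℤ) + f + 1))
    (hs : s ≠ 0) (hsord : ord s = 2 * (f : ℤ) + 1)
    {M : Matrix (Fin 4) (Fin 4) F}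
    (hM : M = !![1, τ/2, 1, τ/2; τ/2, s, τ/2, s; 1, τ/2, 0, 0; τ/2, s, 0, 0])
    (hdet : M.det ≠ 0) :
    IsReducedForm O ord M ![0, 2*f+1, 2*e, 2*e+2*f+1] ![2,3,0,1] := by
  subst hM
  have h2 := hF.two_ne
  have h1O : (1:F) ∈ O := O.one_mem
  have h0O : (0:F) ∈ O := O.zero_mem
  have hτO : τ ∈ O := hF.mem_of_Vo (hF.Vo_mono (by omega) hτV)
  have hsO : s ∈ O := hF.mem_of_Vo (Or.inr (by omega))
  have h2O : (2:F) ∈ O := hF.mem_of_Vo (Or.inr (by omega))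
  have hcan : 2 * (τ/2) = τ := by field_simp
  have hτ2O : 2 * (τ/2) ∈ O := by rw [hcan]; exact hτO
  have hone := hF.ord_one
  have h21 : ord (2 * (1:F)) = (e : ℤ) := by rw [mul_one, he]
  have h2s : ord (2 * s) = (e : ℤ) + (2 * (f:ℤ) + 1) := by
    rw [hF.ord_mul _ _ h2 hs, he, hsord]
  have h2sne : (2*s : F) ≠ 0 := mul_ne_zero h2 hs
  have Hτ : ∀ u v : ℕ, ((u:ℤ) + v ≤ 2 * ((e:ℤ) + f + 1)) →
      (2 * (τ/2) = 0 ∨ (u:ℤ) + (v:ℤ) ≤ 2 * ord (2 * (τ/2))) := by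
    intro u v huv
    rcases hτV with h0 | h1
    · exact Or.inl (by rw [hcan, h0])
    · exact Or.inr (by rw [hcan]; omega)
  have H1 : ∀ u v : ℕ, ((u:ℤ) + v ≤ 2 * (e:ℤ)) →
      (2 * (1:F) = 0 ∨ (u:ℤ) + (v:ℤ) ≤ 2 * ord (2 * (1:F))) :=
    fun u v huv => Or.inr (by rw [h21]; omega)
  have H0 : ∀ u v : ℕ, (2 * (0:F) = 0 ∨ (u:ℤ) + (v:ℤ) ≤ 2 * ord (2 * (0:F))) :=
    fun u v => Or.inl (mul_zero 2)
  have Hs : ∀ u v : ℕ, ((u:ℤ) + v ≤ 2*(e:ℤ) + 4*(f:ℤ) + 2) →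
      (2 * s = 0 ∨ (u:ℤ) + (v:ℤ) ≤ 2 * ord (2 * s)) :=
    fun u v huv => Or.inr (by rw [h2s]; omega)
  have Sτ : ∀ u v : ℕ, ((u:ℤ) + v < 2 * ((e:ℤ) + f + 1)) →
      (2 * (τ/2) = 0 ∨ (u:ℤ) + (v:ℤ) < 2 * ord (2 * (τ/2))) := by
    intro u v huv
    rcases hτV with h0 | h1
    · exact Or.inl (by rw [hcan, h0])
    · exact Or.inr (by rw [hcan]; omega)
  have S0 : ∀ u v : ℕ, (2 * (0:F) = 0 ∨ (u:ℤ) + (v:ℤ) < 2 * ord (2 * (0:F))) :=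
    fun u v => Or.inl (mul_zero 2)
  have P1 : ∀ u v : ℕ, ((u:ℤ) + v = 2 * (e:ℤ)) →
      (2 * (1:F) ≠ 0 ∧ 2 * ord (2 * (1:F)) = (u:ℤ) + (v:ℤ)) :=
    fun u v huv => ⟨by rw [mul_one]; exact h2, by rw [h21]; omega⟩
  have Ps : ∀ u v : ℕ, ((u:ℤ) + v = 2*(e:ℤ) + 4*(f:ℤ) + 2) →
      (2 * s ≠ 0 ∧ 2 * ord (2 * s) = (u:ℤ) + (v:ℤ)) :=
    fun u v huv => ⟨h2sne, by rw [h2s]; omega⟩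
  have I1F : (1:F) = 0 ∨ ((0:ℕ):ℤ) ≤ ord (1:F) := Or.inr (by rw [hone]; norm_num)
  have D0 : (1:F) ≠ 0 ∧ ord (1:F) = ((0:ℕ):ℤ) := ⟨one_ne_zero, by rw [hone]; norm_num⟩
  have ISd : s = 0 ∨ ((2*f+1:ℕ):ℤ) ≤ ord s := Or.inr (by rw [hsord]; push_cast; omega)
  have Ds : s ≠ 0 ∧ ord s = ((2*f+1:ℕ):ℤ) := ⟨hs, by rw [hsord]; push_cast; ring⟩
  have hadm := admC2 (f := f) (e := e) hfe
  refine ⟨⟨?_, ?_, ?_⟩, hdet, ⟨hadm.1, ?_, ?_⟩, hadm, ?_, ?_, ?_⟩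
  · show _ = _
    ext i j
    fin_cases i <;> fin_cases j <;> rfl
  · intro i
    fin_cases i
    exacts [h1O, hsO, h0O, h0O]
  · intro i j
    fin_cases i <;> fin_cases j
    exacts [O.mul_mem h2O h1O, hτ2O, O.mul_mem h2O h1O, hτ2O,
      hτ2O, O.mul_mem h2O hsO, hτ2O, O.mul_mem h2O hsO,
      O.mul_mem h2O h1O, hτ2O, O.mul_mem h2O h0O, O.mul_mem h2O h0O,
      hτ2O, O.mul_mem h2O hsO, O.mul_mem h2O h0O, O.mul_mem h2O h0O]
  · intro i
    fin_cases i
    exacts [I1F, ISd, Or.inl rfl, Or.inl rfl]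
  · intro i j
    fin_cases i <;> fin_cases j
    exacts [H1 0 0 (by omega), Hτ 0 (2*f+1) (by omega), H1 0 (2*e) (by omega),
        Hτ 0 (2*e+2*f+1) (by omega),
      Hτ (2*f+1) 0 (by omega), Hs (2*f+1) (2*f+1) (by omega), Hτ (2*f+1) (2*e) (by omega),
        Hs (2*f+1) (2*e+2*f+1) (by omega),
      H1 (2*e) 0 (by omega), Hτ (2*e) (2*f+1) (by omega), H0 (2*e) (2*e),
        H0 (2*e) (2*e+2*f+1),
      Hτ (2*e+2*f+1) 0 (by omega), Hs (2*e+2*f+1) (2*f+1) (by omega), H0 (2*e+2*f+1) (2*e),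
        H0 (2*e+2*f+1) (2*e+2*f+1)]
  · intro i hi
    fin_cases i
    exacts [P1 0 (2*e) (by omega), Ps (2*f+1) (2*e+2*f+1) (by omega),
      P1 (2*e) 0 (by omega), Ps (2*e+2*f+1) (2*f+1) (by omega)]
  · intro i hi
    fin_cases i
    · exact D0
    · exact Ds
    · exfalso; rcases hi with h'|h'
      · exact absurd h' (by decide)
      · exact absurd h' (show ¬((2*e:ℕ) < 0) by omega)
    · exfalso; rcases hi with h'|h'
      · exact absurd h' (by decide)
      · exact absurd h' (show ¬((2*e+2*f+1:ℕ) < 2*f+1) by omega)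
  · intro i j h1 h2'
    fin_cases i <;> fin_cases j <;>
      first
      | exact absurd rfl h1
      | exact absurd (by decide) h2'
      | exact Sτ 0 (2*f+1) (by omega)
      | exact Sτ (2*f+1) 0 (by omega)
      | exact Sτ 0 (2*e+2*f+1) (by omega)
      | exact Sτ (2*e+2*f+1) 0 (by omega)
      | exact Sτ (2*f+1) (2*e) (by omega)
      | exact Sτ (2*e) (2*f+1) (by omega)
      | exact S0 (2*e) (2*e+2*f+1)
      | exact S0 (2*e+2*f+1) (2*e)

lemma shapeD (hF : LocalFieldAxioms O ord 2 q) {e : ℕ}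
    (he : ord (2 : F) = (e : ℤ)) (he1 : 1 ≤ e)
    {T S D : F} (hT : T ≠ 0) (hTord : ord T = 0)
    (hD : D ≠ 0) (hDord : ord D = 0) (hSO : S ∈ O)
    {M : Matrix (Fin 4) (Fin 4) F}
    (hM : M = !![S, T/2, 0, 0; T/2, 0, 0, 0; 0, 0, 0, D/2; 0, 0, D/2, D])
    (hdet : M.det ≠ 0) :
    IsReducedForm O ord M ![0, 0, 0, 0] ![1,0,3,2] := by
  subst hM
  have h2 := hF.two_ne
  have h1O : (1:F) ∈ O := O.one_mem
  have h0O : (0:F) ∈ O := O.zero_mem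
  have hTO : T ∈ O := hF.mem_of_Vo (Or.inr (by omega))
  have hDO : D ∈ O := hF.mem_of_Vo (Or.inr (by omega))
  have h2O : (2:F) ∈ O := hF.mem_of_Vo (Or.inr (by omega))
  have hcanT : 2 * (T/2) = T := by field_simp
  have hcanD : 2 * (D/2) = D := by field_simp
  have hT2O : 2 * (T/2) ∈ O := by rw [hcanT]; exact hTO
  have hD2O : 2 * (D/2) ∈ O := by rw [hcanD]; exact hDO
  have hone := hF.ord_one
  have hT2 : ord (2 * (T/2)) = 0 := by rw [hcanT, hTord]
  have hD2 : ord (2 * (D/2)) = 0 := by rw [hcanD, hDord]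
  have HT : 2 * (T/2) = 0 ∨ ((0:ℕ):ℤ) + ((0:ℕ):ℤ) ≤ 2 * ord (2 * (T/2)) :=
    Or.inr (by rw [hT2]; omega)
  have HD : 2 * (D/2) = 0 ∨ ((0:ℕ):ℤ) + ((0:ℕ):ℤ) ≤ 2 * ord (2 * (D/2)) :=
    Or.inr (by rw [hD2]; omega)
  have H0 : 2 * (0:F) = 0 ∨ ((0:ℕ):ℤ) + ((0:ℕ):ℤ) ≤ 2 * ord (2 * (0:F)) :=
    Or.inl (mul_zero 2)
  have HS : 2 * S = 0 ∨ ((0:ℕ):ℤ) + ((0:ℕ):ℤ) ≤ 2 * ord (2 * S) := by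
    by_cases h0 : S = 0
    · exact Or.inl (by rw [h0]; ring)
    · refine Or.inr ?_
      rw [hF.ord_mul _ _ h2 h0, he]
      rcases hF.Vo_of_mem hSO with h'|h'
      · exact absurd h' h0
      · omega
  have H2D : 2 * D = 0 ∨ ((0:ℕ):ℤ) + ((0:ℕ):ℤ) ≤ 2 * ord (2 * D) := by
    refine Or.inr ?_
    rw [hF.ord_mul _ _ h2 hD, he, hDord]
    omega
  have S0 : 2 * (0:F) = 0 ∨ ((0:ℕ):ℤ) + ((0:ℕ):ℤ) < 2 * ord (2 * (0:F)) :=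
    Or.inl (mul_zero 2)
  have ISD : S = 0 ∨ ((0:ℕ):ℤ) ≤ ord S := hF.Vo_of_mem hSO
  have IDD : D = 0 ∨ ((0:ℕ):ℤ) ≤ ord D := Or.inr (by rw [hDord]; norm_num)
  have PT : 2 * (T/2) ≠ 0 ∧ 2 * ord (2 * (T/2)) = ((0:ℕ):ℤ) + ((0:ℕ):ℤ) :=
    ⟨by rw [hcanT]; exact hT, by rw [hT2]; norm_num⟩
  have PD : 2 * (D/2) ≠ 0 ∧ 2 * ord (2 * (D/2)) = ((0:ℕ):ℤ) + ((0:ℕ):ℤ) :=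
    ⟨by rw [hcanD]; exact hD, by rw [hD2]; norm_num⟩
  have hadm := admD
  refine ⟨⟨?_, ?_, ?_⟩, hdet, ⟨hadm.1, ?_, ?_⟩, hadm, ?_, ?_, ?_⟩
  · show _ = _
    ext i j
    fin_cases i <;> fin_cases j <;> rfl
  · intro i
    fin_cases i
    exacts [hSO, h0O, h0O, hDO]
  · intro i j
    fin_cases i <;> fin_cases j
    exacts [O.mul_mem h2O hSO, hT2O, O.mul_mem h2O h0O, O.mul_mem h2O h0O,
      hT2O, O.mul_mem h2O h0O, O.mul_mem h2O h0O, O.mul_mem h2O h0O,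
      O.mul_mem h2O h0O, O.mul_mem h2O h0O, O.mul_mem h2O h0O, hD2O,
      O.mul_mem h2O h0O, O.mul_mem h2O h0O, hD2O, O.mul_mem h2O hDO]
  · intro i
    fin_cases i
    exacts [ISD, Or.inl rfl, Or.inl rfl, IDD]
  · intro i j
    fin_cases i <;> fin_cases j
    exacts [HS, HT, H0, H0,
      HT, H0, H0, H0,
      H0, H0, H0, HD,
      H0, H0, HD, H2D]
  · intro i hi
    fin_cases i
    exacts [PT, PT, PD, PD]
  · intro i hi
    exfalso
    rcases hi with h'|h'
    · revert h'; fin_cases i <;> decide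
    · revert h'; fin_cases i <;> exact (show ¬((0:ℕ) < 0) by omega)
  · intro i j h1 h2'
    fin_cases i <;> fin_cases j <;>
      first
      | exact absurd rfl h1
      | exact absurd (by decide) h2'
      | exact S0

lemma orthSum_normGram (π T S : F) (f : ℕ) :
    orthSum (normGram π T S f) (-(normGram π T S f)) =
      !![1, π^f*T/2, 0, 0; π^f*T/2, π^(2*f)*S, 0, 0;
         0, 0, -1, -(π^f*T/2); 0, 0, -(π^f*T/2), -(π^(2*f)*S)] := by
  ext i j
  fin_cases i <;> fin_cases j <;> rfl

lemma det_AA (γ s₀ : F) :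
    (!![1, γ, 0, 0; γ, s₀, 0, 0; 0, 0, (-1:F), -γ; 0, 0, -γ, -s₀]).det
      = (s₀ - γ^2)^2 := by
  simp [Matrix.det_succ_row_zero, Fin.sum_univ_succ, Fin.succAbove,
    Matrix.vecHead, Matrix.vecTail, Function.comp]
  try ring

lemma equiv_det {A B : Matrix (Fin 4) (Fin 4) F} (h : EquivO O ord A B)
    (hA : A.det ≠ 0) : B.det ≠ 0 := by
  obtain ⟨U, hU, hB⟩ := h
  rw [hB, Matrix.det_mul, Matrix.det_mul, Matrix.det_transpose]
  exact mul_ne_zero (mul_ne_zero hU.2.1 hA) hU.2.1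

lemma det_orthSum_ne (hF : LocalFieldAxioms O ord 2 q) {π T S : F} {f : ℕ}
    (hπ : π ≠ 0) (hD : T^2 - 4*S ≠ 0)
    {G : Matrix (Fin 2) (Fin 2) F} (hG : G = normGram π T S f) :
    (orthSum G (-G)).det ≠ 0 := by
  subst hG
  rw [orthSum_normGram, det_AA]
  haveI := hF.charZero
  have h4 := hF.four_ne
  have h2 := hF.two_ne
  have key : (π^(2*f)*S - (π^f*T/2)^2) = -(π^(2*f)) * (T^2 - 4*S) / 4 := by
    field_simp
    ring
  rw [key]
  apply pow_ne_zero
  apply div_ne_zero _ h4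
  exact mul_ne_zero (neg_ne_zero.mpr (pow_ne_zero _ hπ)) hD

/-- case A change of basis. -/
lemma equivA (hF : LocalFieldAxioms O ord 2 q) {π T S : F} {f : ℕ}
    {G : Matrix (Fin 2) (Fin 2) F} (hG : G = normGram π T S f)
    (hγO : π^f*T/2 ∈ O) :
    EquivO O ord (orthSum G (-G))
      !![1,1,0,0; 1,0,0,0;
         0,0,π^(2*f)*S - (π^f*T/2)*(π^f*T/2), π^(2*f)*S - (π^f*T/2)*(π^f*T/2);
         0,0,π^(2*f)*S - (π^f*T/2)*(π^f*T/2), 0] := by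
  subst hG
  haveI := hF.charZero
  set γ := π^f*T/2 with hγ
  set s₀ := π^(2*f)*S with hs₀
  refine ⟨!![1,1,-γ,-γ; 0,0,1,1; 0,1,0,-γ; 0,0,0,1], ⟨?_, ?_, ?_⟩, ?_⟩
  · intro i j
    fin_cases i <;> fin_cases j <;>
      first
        | exact O.one_mem
        | exact O.zero_mem
        | exact O.neg_mem hγO
  · have : (!![1,1,-γ,-γ; 0,0,1,1; 0,1,0,-γ; 0,0,0,1] : Matrix (Fin 4) (Fin 4) F).det
        = -1 := by
      simp [Matrix.det_succ_row_zero, Fin.sum_univ_succ, Fin.succAbove,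
        Matrix.vecHead, Matrix.vecTail, Function.comp]
    rw [this]; norm_num
  · have : (!![1,1,-γ,-γ; 0,0,1,1; 0,1,0,-γ; 0,0,0,1] : Matrix (Fin 4) (Fin 4) F).det
        = -1 := by
      simp [Matrix.det_succ_row_zero, Fin.sum_univ_succ, Fin.succAbove,
        Matrix.vecHead, Matrix.vecTail, Function.comp]
    rw [this]; exact hF.ord_neg_one
  · rw [orthSum_normGram]
    have h2 := hF.two_ne
    ext i j
    fin_cases i <;> fin_cases j <;>
      simp [Matrix.mul_apply, Fin.sum_univ_succ, Matrix.transpose_apply,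
        Matrix.vecHead, Matrix.vecTail, Function.comp] <;>
      (try field_simp) <;> (try ring)

/-- case B change of basis. -/
lemma equivB (hF : LocalFieldAxioms O ord 2 q) {π T S m : F} {f : ℕ}
    {G : Matrix (Fin 2) (Fin 2) F} (hG : G = normGram π T S f)
    (hπO : π ∈ O) (hTO : T ∈ O) (hmO : m ∈ O) :
    EquivO O ord (orthSum G (-G))
      !![1, 1, π^f*(T-2*m)/2, π^f*(T-2*m)/2;
         1, 0, π^f*(T-2*m)/2, 0;
         π^f*(T-2*m)/2, π^f*(T-2*m)/2, π^(2*f)*(m*m - m*T + S), π^(2*f)*(m*m - m*T + S);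
         π^f*(T-2*m)/2, 0, π^(2*f)*(m*m - m*T + S), 0] := by
  subst hG
  haveI := hF.charZero
  have hpf : (π^f : F) ∈ O := O.pow_mem hπO f
  refine ⟨!![1, 1, -(m*π^f), -(m*π^f); 0, 0, 1, 1; 0, 1, 0, π^f*(T-m); 0, 0, 0, -1],
    ⟨?_, ?_, ?_⟩, ?_⟩
  · intro i j
    fin_cases i <;> fin_cases j <;>
      first
        | exact O.one_mem
        | exact O.zero_mem
        | exact O.neg_mem O.one_mem
        | exact O.neg_mem (O.mul_mem hmO hpf)
        | exact O.mul_mem hpf (O.sub_mem hTO hmO)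
  · have : (!![1, 1, -(m*π^f), -(m*π^f); 0, 0, 1, 1; 0, 1, 0, π^f*(T-m); 0, 0, 0, -1]
        : Matrix (Fin 4) (Fin 4) F).det = 1 := by
      simp [Matrix.det_succ_row_zero, Fin.sum_univ_succ, Fin.succAbove,
        Matrix.vecHead, Matrix.vecTail, Function.comp]
      try ring
    rw [this]; norm_num
  · have : (!![1, 1, -(m*π^f), -(m*π^f); 0, 0, 1, 1; 0, 1, 0, π^f*(T-m); 0, 0, 0, -1]
        : Matrix (Fin 4) (Fin 4) F).det = 1 := by
      simp [Matrix.det_succ_row_zero, Fin.sum_univ_succ, Fin.succAbove,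
        Matrix.vecHead, Matrix.vecTail, Function.comp]
      try ring
    rw [this]; exact hF.ord_one
  · rw [orthSum_normGram]
    have h2 := hF.two_ne
    ext i j
    fin_cases i <;> fin_cases j <;>
      simp [Matrix.mul_apply, Fin.sum_univ_succ, Matrix.transpose_apply,
        Matrix.vecHead, Matrix.vecTail, Function.comp] <;>
      (try field_simp) <;> (try ring)

/-- case C change of basis. -/
lemma equivC (hF : LocalFieldAxioms O ord 2 q) {π T S m : F} {f : ℕ}
    {G : Matrix (Fin 2) (Fin 2) F} (hG : G = normGram π T S f)
    (hπO : π ∈ O) (hTO : T ∈ O) (hmO : m ∈ O) :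
    EquivO O ord (orthSum G (-G))
      !![1, π^f*(T-2*m)/2, 1, π^f*(T-2*m)/2;
         π^f*(T-2*m)/2, π^(2*f)*(m*m - m*T + S), π^f*(T-2*m)/2, π^(2*f)*(m*m - m*T + S);
         1, π^f*(T-2*m)/2, 0, 0;
         π^f*(T-2*m)/2, π^(2*f)*(m*m - m*T + S), 0, 0] := by
  subst hG
  haveI := hF.charZero
  have hpf : (π^f : F) ∈ O := O.pow_mem hπO f
  refine ⟨!![1, -(m*π^f), 1, -(m*π^f); 0, 1, 0, 1; 0, 0, 1, π^f*(T-m); 0, 0, 0, -1],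
    ⟨?_, ?_, ?_⟩, ?_⟩
  · intro i j
    fin_cases i <;> fin_cases j <;>
      first
        | exact O.one_mem
        | exact O.zero_mem
        | exact O.neg_mem O.one_mem
        | exact O.neg_mem (O.mul_mem hmO hpf)
        | exact O.mul_mem hpf (O.sub_mem hTO hmO)
  · have : (!![1, -(m*π^f), 1, -(m*π^f); 0, 1, 0, 1; 0, 0, 1, π^f*(T-m); 0, 0, 0, -1]
        : Matrix (Fin 4) (Fin 4) F).det = -1 := by
      simp [Matrix.det_succ_row_zero, Fin.sum_univ_succ, Fin.succAbove,
        Matrix.vecHead, Matrix.vecTail, Function.comp]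
    rw [this]; norm_num
  · have : (!![1, -(m*π^f), 1, -(m*π^f); 0, 1, 0, 1; 0, 0, 1, π^f*(T-m); 0, 0, 0, -1]
        : Matrix (Fin 4) (Fin 4) F).det = -1 := by
      simp [Matrix.det_succ_row_zero, Fin.sum_univ_succ, Fin.succAbove,
        Matrix.vecHead, Matrix.vecTail, Function.comp]
    rw [this]; exact hF.ord_neg_one
  · rw [orthSum_normGram]
    have h2 := hF.two_ne
    ext i j
    fin_cases i <;> fin_cases j <;>
      simp [Matrix.mul_apply, Fin.sum_univ_succ, Matrix.transpose_apply,
        Matrix.vecHead, Matrix.vecTail, Function.comp] <;>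
      (try field_simp) <;> (try ring)

/-- case D change of basis (f = 0). -/
lemma equivD (hF : LocalFieldAxioms O ord 2 q) {π T S : F}
    {G : Matrix (Fin 2) (Fin 2) F} (hG : G = normGram π T S 0)
    (hT : T ≠ 0) (hTord : ord T = 0) (hTO : T ∈ O) (hkO : 2*S/T ∈ O)
    (h2O : (2:F) ∈ O) :
    EquivO O ord (orthSum G (-G))
      !![S, T/2, 0, 0; T/2, 0, 0, 0;
         0, 0, 0, (T^2-4*S)/2; 0, 0, (T^2-4*S)/2, T^2-4*S] := by
  subst hG
  haveI := hF.charZero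
  refine ⟨!![0, 1, -(2*S/T), 0; 1, 0, 1, 0; 0, 1, -(2*S/T), -T; 0, 0, 1, 2],
    ⟨?_, ?_, ?_⟩, ?_⟩
  · intro i j
    fin_cases i <;> fin_cases j <;>
      first
        | exact O.one_mem
        | exact O.zero_mem
        | exact O.neg_mem hkO
        | exact O.neg_mem hTO
        | exact h2O
  · have : (!![0, 1, -(2*S/T), 0; 1, 0, 1, 0; 0, 1, -(2*S/T), -T; 0, 0, 1, 2]
        : Matrix (Fin 4) (Fin 4) F).det = -T := by
      simp [Matrix.det_succ_row_zero, Fin.sum_univ_succ, Fin.succAbove,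
        Matrix.vecHead, Matrix.vecTail, Function.comp]
      try ring
    rw [this]; exact neg_ne_zero.mpr hT
  · have : (!![0, 1, -(2*S/T), 0; 1, 0, 1, 0; 0, 1, -(2*S/T), -T; 0, 0, 1, 2]
        : Matrix (Fin 4) (Fin 4) F).det = -T := by
      simp [Matrix.det_succ_row_zero, Fin.sum_univ_succ, Fin.succAbove,
        Matrix.vecHead, Matrix.vecTail, Function.comp]
      try ring
    rw [this, hF.ord_neg hT, hTord]
  · rw [orthSum_normGram]
    have h2 := hF.two_ne
    ext i j
    fin_cases i <;> fin_cases j <;>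
      simp [Matrix.mul_apply, Fin.sum_univ_succ, Matrix.transpose_apply,
        Matrix.vecHead, Matrix.vecTail, Function.comp, pow_zero] <;>
      (try field_simp) <;> (try ring)

namespace QuadAlgebraAxioms
variable (hF : LocalFieldAxioms O ord 2 q) (hE : QuadAlgebraAxioms O ord E ω d ξ)
include hF hE

/-- lower bound on `ord T`. -/
lemma vo_T (g : ℕ) (hg : (g : ℤ) ≤ ord (2:F)) (hdord : ord ((Algebra.trace F E ω)^2 - 4 * Algebra.norm F ω) = 2 * g ∨
      2 * (g:ℤ) + 1 ≤ ord ((Algebra.trace F E ω)^2 - 4 * Algebra.norm F ω)) :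
    Vo ord (Algebra.trace F E ω) (g : ℤ) := by
  set T := Algebra.trace F E ω
  set S := Algebra.norm F ω
  by_cases hT0 : T = 0
  · exact Or.inl hT0
  refine Or.inr ?_
  by_contra hlt
  push_neg at hlt
  have hT0' : 0 ≤ ord T := by
    rcases hF.Vo_of_mem hE.trace_mem with h0|h1
    · exact absurd h0 hT0
    · exact h1
  have hT2 : ord (T^2) = 2 * ord T := by rw [hF.ord_pow hT0]; ring
  have hV : Vo ord (-(4*S)) (ord (T^2) + 1) := by
    apply hF.Vo_neg
    have h4 : Vo ord (4:F) (2*(g:ℤ)) := Or.inr (by rw [hF.ord_four]; omega)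
    have := hF.Vo_mul h4 (hF.Vo_of_mem hE.norm_mem)
    refine hF.Vo_mono ?_ (by simpa using this)
    omega
  have heq := hF.ord_add_eq_left (pow_ne_zero 2 hT0) hV
  have hDeq : T^2 + -(4*S) = T^2 - 4*S := by ring
  rw [hDeq] at heq
  rcases hdord with h|h
  · rw [heq.2] at h; omega
  · rw [heq.2] at h; omega

end QuadAlgebraAxioms

namespace LocalFieldAxioms
variable (hF : LocalFieldAxioms O ord 2 q)
include hF

lemma ord_scaled_disc {π : F} (hπ : π ≠ 0 ∧ ord π = 1)
    {T S : F} (hD : T^2 - 4*S ≠ 0) (f : ℕ) :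
    (π^(2*f)*S - (π^f*T/2)*(π^f*T/2) ≠ 0) ∧
    ord (π^(2*f)*S - (π^f*T/2)*(π^f*T/2)) =
      2*(f:ℤ) + ord (T^2-4*S) - 2*ord (2:F) := by
  haveI := hF.charZero
  have h4 := hF.four_ne
  have key : π^(2*f)*S - (π^f*T/2)*(π^f*T/2) = -(π^(2*f)) * (T^2-4*S) / 4 := by
    field_simp
    ring
  have hne1 : (-(π^(2*f)) : F) ≠ 0 := neg_ne_zero.mpr (pow_ne_zero _ hπ.1)
  have hne2 : (-(π^(2*f)) * (T^2-4*S) : F) ≠ 0 := mul_ne_zero hne1 hD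
  constructor
  · rw [key]; exact div_ne_zero hne2 h4
  · rw [key, hF.ord_div hne2 h4, hF.ord_mul _ _ hne1 hD,
      hF.ord_neg (pow_ne_zero _ hπ.1), hF.ord_pow hπ.1, hπ.2, hF.ord_four]
    push_cast; ring

lemma ord_scale {π : F} (hπ : π ≠ 0 ∧ ord π = 1) {x : F} (hx : x ≠ 0) (k : ℕ) :
    π^k * x ≠ 0 ∧ ord (π^k * x) = (k : ℤ) + ord x := by
  have hp : (π^k : F) ≠ 0 := pow_ne_zero _ hπ.1
  refine ⟨mul_ne_zero hp hx, ?_⟩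
  rw [hF.ord_mul _ _ hp hx, hF.ord_pow hπ.1, hπ.2]
  ring

end LocalFieldAxioms

theorem statement15' {F : Type} [Field F] (O : Subring F) (ord : F → ℤ) (q e : ℕ)
    (hF : LocalFieldAxioms O ord 2 q) (he : ord (2 : F) = e)
    (π : F) (hπ : π ≠ 0 ∧ ord π = 1)
    (E : Type) [CommRing E] [Algebra F E] (ω : E) (d : ℕ) (ξ : ℤ)
    (hE : QuadAlgebraAxioms O ord E ω d ξ)
    (f : ℕ)
    (G : Matrix (Fin 2) (Fin 2) F)
    (hG : G = normGram π (Algebra.trace F E ω) (Algebra.norm F ω) f) :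
    (d = 0 →
      (f = 0 → ∃ B', EquivO O ord (orthSum G (-G)) B' ∧
        IsReducedForm O ord B' ![0, 0, 0, 0] ![1, 0, 3, 2]) ∧
      (0 < f → f < 2 * e → ∃ B', EquivO O ord (orthSum G (-G)) B' ∧
        IsReducedForm O ord B' ![0, f, f, 2 * f] ![3, 2, 1, 0]) ∧
      (2 * e ≤ f → ∃ B', EquivO O ord (orthSum G (-G)) B' ∧
        IsReducedForm O ord B' ![0, 2 * e, 2 * f - 2 * e, 2 * f] ![1, 0, 3, 2])) ∧
    (∀ g : ℕ, d = 2 * g → 0 < g → g ≤ e →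
      (f ≤ g - 1 → ∃ B', EquivO O ord (orthSum G (-G)) B' ∧
        IsReducedForm O ord B' ![0, 2 * f + 1, 2 * g - 1, 2 * g + 2 * f] ![3, 2, 1, 0]) ∧
      (g ≤ f → f < 2 * e - g → ∃ B', EquivO O ord (orthSum G (-G)) B' ∧
        IsReducedForm O ord B' ![0, g + f, g + f, 2 * g + 2 * f] ![3, 2, 1, 0]) ∧
      (2 * e - g ≤ f → ∃ B', EquivO O ord (orthSum G (-G)) B' ∧
        IsReducedForm O ord B'
          ![0, 2 * e, 2 * g + 2 * f - 2 * e, 2 * g + 2 * f] ![1, 0, 3, 2])) ∧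
    (d = 2 * e + 1 →
      (f < e → ∃ B', EquivO O ord (orthSum G (-G)) B' ∧
        IsReducedForm O ord B'
          ![0, 2 * f + 1, 2 * e, 2 * e + 2 * f + 1] ![2, 3, 0, 1]) ∧
      (e ≤ f → ∃ B', EquivO O ord (orthSum G (-G)) B' ∧
        IsReducedForm O ord B'
          ![0, 2 * e, 2 * f + 1, 2 * e + 2 * f + 1] ![1, 0, 3, 2])) := by
  have he1 : 1 ≤ e := by
    have h := hF.ord_two_pos
    rw [he] at h
    exact_mod_cast h
  have hπO : π ∈ O := hF.mem_of_Vo (Or.inr (by rw [hπ.2]; norm_num))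
  have hTO := hE.trace_mem
  have hSO := hE.norm_mem
  have hDne := hE.disc_ne
  have hDord := hE.disc_ord
  set T := Algebra.trace F E ω with hTdef
  set S := Algebra.norm F ω with hSdef
  refine ⟨?_, ?_, ?_⟩
  · -- unramified : d = 0
    intro hd
    have hTu := hE.unram_T hF hπ hd
    have hDord0 : ord (T^2 - 4*S) = 0 := by rw [hDord, hd]; norm_num
    refine ⟨?_, ?_, ?_⟩
    · -- f = 0
      intro hf
      subst hf
      have hkO : 2*S/T ∈ O := by
        by_cases hS0 : S = 0
        · rw [hS0, mul_zero, zero_div]; exact O.zero_mem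
        · apply hF.mem_of_Vo
          refine Or.inr ?_
          rw [hF.ord_div (mul_ne_zero hF.two_ne hS0) hTu.1,
            hF.ord_mul _ _ hF.two_ne hS0, hTu.2, he]
          rcases hF.Vo_of_mem hSO with h0|h1
          · exact absurd h0 hS0
          · omega
      have h2O : (2:F) ∈ O := hF.mem_of_Vo (Or.inr (by rw [he]; positivity))
      have hequiv := equivD hF hG hTu.1 hTu.2 hTO hkO h2O
      have hdet := equiv_det hequiv (det_orthSum_ne hF hπ.1 hDne hG)
      exact ⟨_, hequiv, shapeD hF he he1 hTu.1 hTu.2 hDne hDord0 hSO rfl hdet⟩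
    · -- 0 < f < 2e
      intro hf1 hf2
      have hequiv := equivB (m := (0:F)) hF hG hπO hTO O.zero_mem
      have hdet := equiv_det hequiv (det_orthSum_ne hF hπ.1 hDne hG)
      have eT : T - 2*(0:F) = T := by ring
      have eS : (0:F)*0 - 0*T + S = S := by ring
      have hτfacts := hF.ord_scale hπ (x := T - 2*(0:F)) (by rw [eT]; exact hTu.1) f
      have hτord : ord (π^f*(T - 2*(0:F))) = (f : ℤ) := by
        rw [hτfacts.2, eT, hTu.2]; ring
      have hsVo : Vo ord (π^(2*f)*((0:F)*0 - 0*T + S)) (f : ℤ) := by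
        rw [eS]
        by_cases hS0 : S = 0
        · exact Or.inl (by rw [hS0, mul_zero])
        · refine Or.inr ?_
          rw [(hF.ord_scale hπ hS0 (2*f)).2]
          rcases hF.Vo_of_mem hSO with h0|h1
          · exact absurd h0 hS0
          · push_cast; omega
      have hs3 : 2 * (π^(2*f)*((0:F)*0 - 0*T + S)) = 0 ∨
          3 * (f:ℤ) < 2 * ord (2 * (π^(2*f)*((0:F)*0 - 0*T + S))) := by
        rw [eS]
        by_cases hS0 : S = 0
        · exact Or.inl (by rw [hS0, mul_zero, mul_zero])
        · refine Or.inr ?_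
          have hps : (π^(2*f)*S : F) ≠ 0 := mul_ne_zero (pow_ne_zero _ hπ.1) hS0
          rw [hF.ord_mul _ _ hF.two_ne hps, he, (hF.ord_scale hπ hS0 (2*f)).2]
          rcases hF.Vo_of_mem hSO with h0|h1
          · exact absurd h0 hS0
          · push_cast; omega
      exact ⟨_, hequiv, shapeB hF he hf1 hf2 hτfacts.1 hτord hsVo hs3 rfl hdet⟩
    · -- 2e ≤ f
      intro hf
      have hγO : π^f*T/2 ∈ O := by
        apply hF.mem_of_Vo
        refine Or.inr ?_
        rw [hF.ord_div (mul_ne_zero (pow_ne_zero _ hπ.1) hTu.1) hF.two_ne,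
          (hF.ord_scale hπ hTu.1 f).2, hTu.2, he]
        omega
      have hequiv := equivA hF hG hγO
      have hdet := equiv_det hequiv (det_orthSum_ne hF hπ.1 hDne hG)
      have htf := hF.ord_scaled_disc hπ hDne f
      have htord : ord (π^(2*f)*S - (π^f*T/2)*(π^f*T/2)) = ((2*f - 2*e : ℕ) : ℤ) := by
        rw [htf.2, hDord0, he]
        push_cast
        omega
      have hv : (![0, 2*e, 2*f - 2*e, 2*f] : Fin 4 → ℕ)
          = ![0, 2*e, 2*f - 2*e, (2*f - 2*e) + 2*e] := by
        funext i; fin_cases i <;> simp <;> omega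
      rw [hv]
      exact ⟨_, hequiv, shapeA hF he he1 (by omega) htf.1 htord rfl hdet⟩
  · -- ramified even : d = 2g
    intro g hd hg1 hge
    obtain ⟨m, hmO, ⟨hS'ne, hS'ord⟩, hT'ne, hT'ord⟩ :=
      hE.ram_even_data hF hπ g hg1 (by rw [he]; exact_mod_cast hge) hd
    have hDordg : ord (T^2 - 4*S) = 2*(g:ℤ) := by rw [hDord, hd]; push_cast; ring
    refine ⟨?_, ?_, ?_⟩
    · -- f ≤ g - 1
      intro hf
      have hequiv := equivC (m := m) hF hG hπO hTO hmO
      have hdet := equiv_det hequiv (det_orthSum_ne hF hπ.1 hDne hG)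
      have hτf := hF.ord_scale hπ hT'ne f
      have hτord : ord (π^f*(T - 2*m)) = (f:ℤ) + g := by rw [hτf.2, hT'ord]
      have hsf := hF.ord_scale hπ hS'ne (2*f)
      have hsord : ord (π^(2*f)*(m*m - m*T + S)) = 2*(f:ℤ) + 1 := by
        rw [hsf.2, hS'ord]; push_cast; ring
      exact ⟨_, hequiv,
        shapeC1 hF he hg1 hge (by omega) hτf.1 hτord hsf.1 hsord rfl hdet⟩
    · -- g ≤ f < 2e - g
      intro hf1 hf2
      have hequiv := equivB (m := m) hF hG hπO hTO hmO
      have hdet := equiv_det hequiv (det_orthSum_ne hF hπ.1 hDne hG)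
      have hτf := hF.ord_scale hπ hT'ne f
      have hτord : ord (π^f*(T - 2*m)) = ((g + f : ℕ) : ℤ) := by
        rw [hτf.2, hT'ord]; push_cast; ring
      have hsf := hF.ord_scale hπ hS'ne (2*f)
      have hsVo : Vo ord (π^(2*f)*(m*m - m*T + S)) ((g + f : ℕ) : ℤ) := by
        refine Or.inr ?_
        rw [hsf.2, hS'ord]
        push_cast; omega
      have hs3 : 2 * (π^(2*f)*(m*m - m*T + S)) = 0 ∨
          3 * ((g + f : ℕ):ℤ) < 2 * ord (2 * (π^(2*f)*(m*m - m*T + S))) := by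
        refine Or.inr ?_
        rw [hF.ord_mul _ _ hF.two_ne hsf.1, he, hsf.2, hS'ord]
        push_cast; omega
      have hv : (![0, g + f, g + f, 2*g + 2*f] : Fin 4 → ℕ)
          = ![0, g + f, g + f, 2*(g + f)] := by
        funext i; fin_cases i <;> simp <;> omega
      rw [hv]
      exact ⟨_, hequiv,
        shapeB hF he (by omega) (by omega) hτf.1 hτord hsVo hs3 rfl hdet⟩
    · -- 2e - g ≤ f
      intro hf
      have hTg : Vo ord T (g : ℤ) :=
        hE.vo_T hF g (by rw [he]; exact_mod_cast hge) (Or.inl (by rw [← hTdef, ← hSdef, hDordg]))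
      have hγO : π^f*T/2 ∈ O := by
        by_cases hT0 : T = 0
        · rw [hT0, mul_zero, zero_div]; exact O.zero_mem
        · apply hF.mem_of_Vo
          refine Or.inr ?_
          rw [hF.ord_div (mul_ne_zero (pow_ne_zero _ hπ.1) hT0) hF.two_ne,
            (hF.ord_scale hπ hT0 f).2, he]
          rcases hTg with h0|h1
          · exact absurd h0 hT0
          · omega
      have hequiv := equivA hF hG hγO
      have hdet := equiv_det hequiv (det_orthSum_ne hF hπ.1 hDne hG)
      have htf := hF.ord_scaled_disc hπ hDne f
      have htord : ord (π^(2*f)*S - (π^f*T/2)*(π^f*T/2))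
          = ((2*g + 2*f - 2*e : ℕ) : ℤ) := by
        rw [htf.2, hDordg, he]
        push_cast
        omega
      have hv : (![0, 2*e, 2*g + 2*f - 2*e, 2*g + 2*f] : Fin 4 → ℕ)
          = ![0, 2*e, 2*g + 2*f - 2*e, (2*g + 2*f - 2*e) + 2*e] := by
        funext i; fin_cases i <;> simp <;> omega
      rw [hv]
      exact ⟨_, hequiv, shapeA hF he he1 (by omega) htf.1 htord rfl hdet⟩
  · -- ramified odd : d = 2e + 1
    intro hd
    obtain ⟨m, hmO, ⟨hS'ne, hS'ord⟩, hT'V⟩ :=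
      hE.ram_odd_data hF hπ (by rw [he, hd]; push_cast; ring)
    have hDorde : ord (T^2 - 4*S) = 2*(e:ℤ) + 1 := by rw [hDord, hd]; push_cast; ring
    refine ⟨?_, ?_⟩
    · -- f < e
      intro hf
      have hequiv := equivC (m := m) hF hG hπO hTO hmO
      have hdet := equiv_det hequiv (det_orthSum_ne hF hπ.1 hDne hG)
      have hτV : Vo ord (π^f*(T - 2*m)) ((e:ℤ) + f + 1) := by
        rcases hT'V with h0|h1
        · exact Or.inl (by rw [h0, mul_zero])
        · by_cases hT'0 : T - 2*m = 0
          · exact Or.inl (by rw [hT'0, mul_zero])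
          · refine Or.inr ?_
            rw [(hF.ord_scale hπ hT'0 f).2]
            rw [he] at h1
            have hbr : ord (Algebra.trace F E ω - 2*m) = ord (T - 2*m) := rfl
            omega
      have hsf := hF.ord_scale hπ hS'ne (2*f)
      have hsord : ord (π^(2*f)*(m*m - m*T + S)) = 2*(f:ℤ) + 1 := by
        rw [hsf.2, hS'ord]; push_cast; ring
      exact ⟨_, hequiv, shapeC2 hF he he1 hf hτV hsf.1 hsord rfl hdet⟩
    · -- e ≤ f
      intro hf
      have hTg : Vo ord T (e : ℤ) := by
        refine hE.vo_T hF e (by rw [he]) (Or.inr ?_)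
        rw [← hTdef, ← hSdef, hDorde]
      have hγO : π^f*T/2 ∈ O := by
        by_cases hT0 : T = 0
        · rw [hT0, mul_zero, zero_div]; exact O.zero_mem
        · apply hF.mem_of_Vo
          refine Or.inr ?_
          rw [hF.ord_div (mul_ne_zero (pow_ne_zero _ hπ.1) hT0) hF.two_ne,
            (hF.ord_scale hπ hT0 f).2, he]
          rcases hTg with h0|h1
          · exact absurd h0 hT0
          · omega
      have hequiv := equivA hF hG hγO
      have hdet := equiv_det hequiv (det_orthSum_ne hF hπ.1 hDne hG)
      have htf := hF.ord_scaled_disc hπ hDne f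
      have htord : ord (π^(2*f)*S - (π^f*T/2)*(π^f*T/2)) = ((2*f + 1 : ℕ) : ℤ) := by
        rw [htf.2, hDorde, he]
        push_cast
        omega
      have hv : (![0, 2*e, 2*f + 1, 2*e + 2*f + 1] : Fin 4 → ℕ)
          = ![0, 2*e, 2*f + 1, (2*f + 1) + 2*e] := by
        funext i; fin_cases i <;> simp <;> omega
      rw [hv]
      exact ⟨_, hequiv, shapeA hF he he1 (by omega) htf.1 htord rfl hdet⟩

end AuxiliaryLemmas

/-- `L ⊕ -L` is equivalent to an explicit reduced form of GK type
`(a, σ)`, for `L = (𝔬_{E,f}, 𝒩)`. -/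
theorem statement15 {F : Type} [Field F] (O : Subring F) (ord : F → ℤ) (q e : ℕ)
    (hF : LocalFieldAxioms O ord 2 q) (he : ord (2 : F) = e)
    (π : F) (hπ : π ≠ 0 ∧ ord π = 1)
    (E : Type) [CommRing E] [Algebra F E] (ω : E) (d : ℕ) (ξ : ℤ)
    (hE : QuadAlgebraAxioms O ord E ω d ξ)
    (f : ℕ)
    (G : Matrix (Fin 2) (Fin 2) F)
    (hG : G = normGram π (Algebra.trace F E ω) (Algebra.norm F ω) f) :
    (d = 0 →
      (f = 0 → ∃ B', EquivO O ord (orthSum G (-G)) B' ∧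
        IsReducedForm O ord B' ![0, 0, 0, 0] ![1, 0, 3, 2]) ∧
      (0 < f → f < 2 * e → ∃ B', EquivO O ord (orthSum G (-G)) B' ∧
        IsReducedForm O ord B' ![0, f, f, 2 * f] ![3, 2, 1, 0]) ∧
      (2 * e ≤ f → ∃ B', EquivO O ord (orthSum G (-G)) B' ∧
        IsReducedForm O ord B' ![0, 2 * e, 2 * f - 2 * e, 2 * f] ![1, 0, 3, 2])) ∧
    (∀ g : ℕ, d = 2 * g → 0 < g → g ≤ e →
      (f ≤ g - 1 → ∃ B', EquivO O ord (orthSum G (-G)) B' ∧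
        IsReducedForm O ord B' ![0, 2 * f + 1, 2 * g - 1, 2 * g + 2 * f] ![3, 2, 1, 0]) ∧
      (g ≤ f → f < 2 * e - g → ∃ B', EquivO O ord (orthSum G (-G)) B' ∧
        IsReducedForm O ord B' ![0, g + f, g + f, 2 * g + 2 * f] ![3, 2, 1, 0]) ∧
      (2 * e - g ≤ f → ∃ B', EquivO O ord (orthSum G (-G)) B' ∧
        IsReducedForm O ord B'
          ![0, 2 * e, 2 * g + 2 * f - 2 * e, 2 * g + 2 * f] ![1, 0, 3, 2])) ∧
    (d = 2 * e + 1 →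
      (f < e → ∃ B', EquivO O ord (orthSum G (-G)) B' ∧
        IsReducedForm O ord B'
          ![0, 2 * f + 1, 2 * e, 2 * e + 2 * f + 1] ![2, 3, 0, 1]) ∧
      (e ≤ f → ∃ B', EquivO O ord (orthSum G (-G)) B' ∧
        IsReducedForm O ord B'
          ![0, 2 * e, 2 * f + 1, 2 * e + 2 * f + 1] ![1, 0, 3, 2])) :=
  statement15' O ord q e hF he π hπ E ω d ξ hE f G hG

end GK
end
end

section
/- Let L = (𝔬_{E,f}, 𝒩), and let Jor(L) denote the set of integers i such that some (equivalently, any) Jordan splitting of L has a nonzero ϖ^i-modular component. (1) If E/F is unramified: for f < e, Jor(L) = {f − e} and L is an indecomposable ϖ^{f−e}-modular lattice; for f ≥ e, Jor(L) = {0, 2f − 2e} and L is equivalent to (1) ⊥ (uϖ^{2f−2e}) for some u ∈ 𝔬^×. (2) If E/F is ramified with d = 2g ≤ 2e: for f < e − g, Jor(L) = {f + g − e} and L is an indecomposable ϖ^{f+g−e}-modular lattice; for f ≥ e − g, Jor(L) = {0, 2f + 2g − 2e} and L is equivalent to (1) ⊥ (uϖ^{2f+2g−2e}) for some u ∈ 𝔬^×.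 (3) If E/F is ramified with d = 2e + 1, then Jor(L) = {0, 2f+1} and L is equivalent to (1) ⊥ (uϖ^{2f+1}) for some u ∈ 𝔬^×. -/
open scoped Classical

noncomputable section

namespace GK

variable {F : Type} [Field F]

variable {F : Type} [Field F] {O : Subring F} {ord : F → ℤ} {q : ℕ} {π : F}

lemma lfa_ord_one (hF : LocalFieldAxioms O ord 2 q) : ord 1 = 0 := by
  have h := hF.ord_mul 1 1 one_ne_zero one_ne_zero
  simp at h; omega

lemma lfa_ord_neg_one (hF : LocalFieldAxioms O ord 2 q) : ord (-1 : F) = 0 := by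
  have h := hF.ord_mul (-1) (-1) (by norm_num) (by norm_num)
  simp [lfa_ord_one hF] at h; omega

lemma lfa_ord_neg (hF : LocalFieldAxioms O ord 2 q) {x : F} (hx : x ≠ 0) :
    ord (-x) = ord x := by
  have h := hF.ord_mul (-1) x (by norm_num) hx
  rw [neg_one_mul] at h; rw [h, lfa_ord_neg_one hF]; ring

lemma lfa_ord_inv (hF : LocalFieldAxioms O ord 2 q) {x : F} (hx : x ≠ 0) :
    ord x⁻¹ = -ord x := by
  have h := hF.ord_mul x x⁻¹ hx (inv_ne_zero hx)
  rw [mul_inv_cancel₀ hx, lfa_ord_one hF] at h; omega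

lemma lfa_ord_pow (hF : LocalFieldAxioms O ord 2 q) {x : F} (hx : x ≠ 0) (n : ℕ) :
    ord (x ^ n) = n * ord x := by
  induction n with
  | zero => simpa using lfa_ord_one hF
  | succ k ih =>
      rw [pow_succ, hF.ord_mul _ _ (pow_ne_zero _ hx) hx, ih]; push_cast; ring

lemma lfa_ord_zpow (hF : LocalFieldAxioms O ord 2 q) {x : F} (hx : x ≠ 0) (k : ℤ) :
    ord (x ^ k) = k * ord x := by
  obtain ⟨n, rfl | rfl⟩ := k.eq_nat_or_neg
  · rw [zpow_natCast, lfa_ord_pow hF hx]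
  · rw [zpow_neg, zpow_natCast, lfa_ord_inv hF (pow_ne_zero _ hx), lfa_ord_pow hF hx]
    push_cast; ring

lemma lfa_mem (hF : LocalFieldAxioms O ord 2 q) {x : F} (h : 0 ≤ ord x) : x ∈ O :=
  (hF.mem_integers x).2 (Or.inr h)

lemma lfa_ord_nonneg (hF : LocalFieldAxioms O ord 2 q) {x : F} (hx : x ∈ O) (h0 : x ≠ 0) :
    0 ≤ ord x := ((hF.mem_integers x).1 hx).resolve_left h0

lemma lfa_inv_mem (hF : LocalFieldAxioms O ord 2 q) {x : F} (hx : x ≠ 0) (h : ord x = 0) :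
    x⁻¹ ∈ O := lfa_mem hF (by rw [lfa_ord_inv hF hx, h]; norm_num)

lemma lfa_add_ge (hF : LocalFieldAxioms O ord 2 q) {x y : F} {k : ℤ}
    (hx : x = 0 ∨ k ≤ ord x) (hy : y = 0 ∨ k ≤ ord y) :
    x + y = 0 ∨ k ≤ ord (x + y) := by
  by_cases hx0 : x = 0
  · subst hx0; simpa using hy
  by_cases hy0 : y = 0
  · subst hy0; simpa using hx
  by_cases h0 : x + y = 0
  · exact Or.inl h0
  · right
    exact le_trans (le_min (hx.resolve_left hx0) (hy.resolve_left hy0))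
      (hF.min_le_ord_add x y hx0 hy0 h0)

lemma Qval_fin_two (C : Matrix (Fin 2) (Fin 2) F) (x : Fin 2 → F) :
    Qval C x = C 0 0 * (x 0 * x 0) + (C 0 1 + C 1 0) * (x 0 * x 1) + C 1 1 * (x 1 * x 1) := by
  simp [Qval, Matrix.mulVec, dotProduct, Fin.sum_univ_two]; ring

lemma Qval_transform (B U : Matrix (Fin 2) (Fin 2) F) (x : Fin 2 → F) :
    Qval (U.transpose * B * U) x = Qval B (U.mulVec x) := by
  simp [Qval, Matrix.mulVec, dotProduct, Matrix.mul_apply, Fin.sum_univ_two,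
    Matrix.transpose_apply]
  ring

lemma Qval_smul (c : F) (C : Matrix (Fin 2) (Fin 2) F) (x : Fin 2 → F) :
    Qval (c • C) x = c * Qval C x := by
  simp [Qval, Matrix.mulVec, dotProduct, Fin.sum_univ_two]; ring

lemma Qval_mem (C : Matrix (Fin 2) (Fin 2) F) (x : Fin 2 → F)
    (hC : ∀ s t, C s t ∈ O) (hx : ∀ s, x s ∈ O) : Qval C x ∈ O := by
  rw [Qval_fin_two]
  exact O.add_mem (O.add_mem (O.mul_mem (hC 0 0) (O.mul_mem (hx 0) (hx 0)))
    (O.mul_mem (O.add_mem (hC 0 1) (hC 1 0)) (O.mul_mem (hx 0) (hx 1))))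
    (O.mul_mem (hC 1 1) (O.mul_mem (hx 1) (hx 1)))

lemma mulVec_mem (U : Matrix (Fin 2) (Fin 2) F) (x : Fin 2 → F)
    (hU : ∀ s t, U s t ∈ O) (hx : ∀ s, x s ∈ O) : ∀ s, (U.mulVec x) s ∈ O := by
  intro s
  simp only [Matrix.mulVec, dotProduct, Fin.sum_univ_two]
  exact O.add_mem (O.mul_mem (hU s 0) (hx 0)) (O.mul_mem (hU s 1) (hx 1))

lemma fin2_cases {s t : Fin 2} (h : s ≠ t) : (s = 0 ∧ t = 1) ∨ (s = 1 ∧ t = 0) := by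
  fin_cases s <;> fin_cases t <;> simp_all

/-- determinant of the full-subtype submatrix -/
lemma det_submatrix_full (m : Fin 2 → ℤ) (i : ℤ) (hall : ∀ s, m s = i)
    (C : Matrix (Fin 2) (Fin 2) F) :
    (C.submatrix (fun s : {s : Fin 2 // m s = i} => (s : Fin 2))
      (fun s : {s : Fin 2 // m s = i} => (s : Fin 2))).det = C.det := by
  let e : {s : Fin 2 // m s = i} ≃ Fin 2 :=
    ⟨fun s => s.1, fun s => ⟨s, hall s⟩, fun s => rfl, fun s => rfl⟩
  exact Matrix.det_submatrix_equiv_self e C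

/-- determinant of a singleton-subtype submatrix -/
lemma det_submatrix_single (m : Fin 2 → ℤ) (i : ℤ) (t : Fin 2) (h₀ : m t = i)
    (huniq : ∀ s, m s = i → s = t) (C : Matrix (Fin 2) (Fin 2) F) :
    (C.submatrix (fun s : {s : Fin 2 // m s = i} => (s : Fin 2))
      (fun s : {s : Fin 2 // m s = i} => (s : Fin 2))).det = C t t := by
  letI : Unique {s : Fin 2 // m s = i} :=
    ⟨⟨⟨t, h₀⟩⟩, fun s => Subtype.ext (huniq s.1 s.2)⟩
  rw [Matrix.det_unique]
  rfl

lemma det_fin_two_smul (c : F) (C : Matrix (Fin 2) (Fin 2) F) :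
    (c • C).det = c ^ 2 * C.det := by
  rw [Matrix.det_smul]
  norm_num

/-- invariants of a matrix `GL₂(O)`-equivalent to `G` -/
lemma equiv_invariants (hF : LocalFieldAxioms O ord 2 q)
    {G B' : Matrix (Fin 2) (Fin 2) F}
    (hvals : ∀ x : Fin 2 → F, (∀ s, x s ∈ O) → Qval G x ∈ O)
    (hone : Qval G ![1, 0] = 1)
    (hdet : G.det ≠ 0)
    (hEq : EquivO O ord G B') :
    (∀ x : Fin 2 → F, (∀ s, x s ∈ O) → Qval B' x ∈ O) ∧
    (∃ w : Fin 2 → F, (∀ s, w s ∈ O) ∧ Qval B' w = 1) ∧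
    B'.det ≠ 0 ∧ ord B'.det = ord G.det := by
  obtain ⟨U, ⟨hU, hUd, hUo⟩, rfl⟩ := hEq
  have hdet' : (U.transpose * G * U).det = U.det * (G.det * U.det) := by
    rw [Matrix.det_mul, Matrix.det_mul, Matrix.det_transpose]; ring
  refine ⟨?_, ?_, ?_, ?_⟩
  · intro x hx
    rw [Qval_transform]
    exact hvals _ (mulVec_mem U x hU hx)
  · refine ⟨fun s => U.det⁻¹ * (if s = 0 then U 1 1 else -(U 1 0)), ?_, ?_⟩
    · intro s
      have hinv : U.det⁻¹ ∈ O := lfa_inv_mem hF hUd hUo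
      rcases Fin.cases (motive := fun s => (if s = 0 then U 1 1 else -(U 1 0)) ∈ O)
        (by simpa using hU 1 1) (fun j => by simp; exact hU 1 0) s with h
      exact O.mul_mem hinv h
    · rw [Qval_transform]
      have hd2 : U 0 0 * U 1 1 - U 0 1 * U 1 0 ≠ 0 := by
        rw [← Matrix.det_fin_two]; exact hUd
      have hUw : U.mulVec (fun s => U.det⁻¹ * (if s = 0 then U 1 1 else -(U 1 0)))
          = ![1, 0] := by
        funext s
        fin_cases s <;>
          simp [Matrix.mulVec, dotProduct, Fin.sum_univ_two, Matrix.det_fin_two] <;>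
          field_simp <;> ring
      rw [hUw, hone]
  · rw [hdet']
    exact mul_ne_zero hUd (mul_ne_zero hdet hUd)
  · rw [hdet', hF.ord_mul _ _ hUd (mul_ne_zero hdet hUd), hF.ord_mul _ _ hdet hUd, hUo]
    ring
lemma vec10_mem : ∀ s : Fin 2, (![1, 0] : Fin 2 → F) s ∈ O := by
  intro s; fin_cases s <;> simp [O.one_mem, O.zero_mem]

lemma vec01_mem : ∀ s : Fin 2, (![0, 1] : Fin 2 → F) s ∈ O := by
  intro s; fin_cases s <;> simp [O.one_mem, O.zero_mem]

lemma Qval_e0 (B : Matrix (Fin 2) (Fin 2) F) : Qval B ![1, 0] = B 0 0 := by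
  rw [Qval_fin_two]; simp

lemma Qval_e1 (B : Matrix (Fin 2) (Fin 2) F) : Qval B ![0, 1] = B 1 1 := by
  rw [Qval_fin_two]; simp

lemma jordan_forward (hF : LocalFieldAxioms O ord 2 q) (hπ0 : π ≠ 0) (hπ1 : ord π = 1)
    {B' : Matrix (Fin 2) (Fin 2) F} {D : ℤ}
    (hvals : ∀ x : Fin 2 → F, (∀ s, x s ∈ O) → Qval B' x ∈ O)
    (hone : ∃ w : Fin 2 → F, (∀ s, w s ∈ O) ∧ Qval B' w = 1)
    (hdet : B'.det ≠ 0) (hD : ord B'.det = D)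
    {m : Fin 2 → ℤ} (hJ : IsJordanMatrix O ord π B' m) {i : ℤ} {s : Fin 2}
    (hsi : m s = i) :
    (2 * i = D ∧ i ≤ 0) ∨ (0 ≤ D ∧ (i = 0 ∨ i = D)) := by
  have hs01 : s = 0 ∨ s = 1 := by fin_cases s <;> simp
  obtain ⟨w, hw, hw1⟩ := hone
  by_cases hm : m 0 = m 1
  · -- single modular block
    left
    have hall : ∀ t, m t = i := by
      intro t
      have ht01 : t = 0 ∨ t = 1 := by fin_cases t <;> simp
      rcases hs01 with rfl | rfl <;> rcases ht01 with rfl | rfl <;> omega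
    have hmod := hJ.2 i ⟨s, hsi⟩
    have hrfl : (π : F) ^ (-i) • (B'.submatrix
        (fun s : {s : Fin 2 // m s = i} => (s : Fin 2))
        (fun s : {s : Fin 2 // m s = i} => (s : Fin 2)))
        = ((π : F) ^ (-i) • B').submatrix
        (fun s : {s : Fin 2 // m s = i} => (s : Fin 2))
        (fun s : {s : Fin 2 // m s = i} => (s : Fin 2)) := rfl
    rw [IsModularMat, hrfl] at hmod
    obtain ⟨hEnt, hDet0, hOrd0⟩ := hmod
    rw [det_submatrix_full m i hall] at hDet0 hOrd0
    rw [det_fin_two_smul] at hDet0 hOrd0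
    have hzp : (π : F) ^ (-i) ≠ 0 := zpow_ne_zero _ hπ0
    have hzp2 : ((π : F) ^ (-i)) ^ 2 ≠ 0 := pow_ne_zero _ hzp
    have hBd : B'.det ≠ 0 := hdet
    rw [hF.ord_mul _ _ hzp2 hBd, lfa_ord_pow hF hzp, lfa_ord_zpow hF hπ0, hπ1, hD] at hOrd0
    constructor
    · omega
    · -- i ≤ 0 from the value 1
      have hent' : ∀ a b : Fin 2, ((π : F) ^ (-i) • B') a b ∈ O := by
        intro a b
        exact hEnt ⟨a, hall a⟩ ⟨b, hall b⟩
      have hzmem : Qval ((π : F) ^ (-i) • B') w ∈ O := Qval_mem _ _ hent' hw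
      rw [Qval_smul, hw1, mul_one] at hzmem
      have := lfa_ord_nonneg hF hzmem hzp
      rw [lfa_ord_zpow hF hπ0, hπ1] at this
      omega
  · -- two rank-one blocks
    have hz01 : B' 0 1 = 0 := hJ.1 0 1 hm
    have hz10 : B' 1 0 = 0 := hJ.1 1 0 (Ne.symm hm)
    have key : ∀ t : Fin 2, B' t t ≠ 0 ∧ ord (B' t t) = m t := by
      intro t
      have huniq : ∀ u, m u = m t → u = t := by
        intro u hu
        by_contra hne
        rcases fin2_cases hne with ⟨rfl, rfl⟩ | ⟨rfl, rfl⟩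
        · exact hm hu
        · exact hm hu.symm
      have hmod := hJ.2 (m t) ⟨t, rfl⟩
      have hrfl : (π : F) ^ (-(m t)) • (B'.submatrix
          (fun s : {s : Fin 2 // m s = m t} => (s : Fin 2))
          (fun s : {s : Fin 2 // m s = m t} => (s : Fin 2)))
          = ((π : F) ^ (-(m t)) • B').submatrix
          (fun s : {s : Fin 2 // m s = m t} => (s : Fin 2))
          (fun s : {s : Fin 2 // m s = m t} => (s : Fin 2)) := rfl
      rw [IsModularMat, hrfl] at hmod
      obtain ⟨hEnt, hDet0, hOrd0⟩ := hmod
      rw [det_submatrix_single m (m t) t rfl huniq] at hDet0 hOrd0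
      have happ : ((π : F) ^ (-(m t)) • B') t t = (π : F) ^ (-(m t)) * B' t t := rfl
      rw [happ] at hDet0 hOrd0
      have hzp : (π : F) ^ (-(m t)) ≠ 0 := zpow_ne_zero _ hπ0
      have hB0 : B' t t ≠ 0 := by
        intro h; exact hDet0 (by rw [h, mul_zero])
      refine ⟨hB0, ?_⟩
      rw [hF.ord_mul _ _ hzp hB0, lfa_ord_zpow hF hπ0, hπ1] at hOrd0
      omega
    have k0 := key 0
    have k1 := key 1
    have hdet2 : B'.det = B' 0 0 * B' 1 1 := by
      rw [Matrix.det_fin_two, hz01]; ring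
    have hsum : m 0 + m 1 = D := by
      rw [← hD, hdet2, hF.ord_mul _ _ k0.1 k1.1, k0.2, k1.2]
    have hm0 : 0 ≤ m 0 := by
      have := lfa_ord_nonneg hF (by rw [← Qval_e0 B']; exact hvals _ vec10_mem) k0.1
      omega
    have hm1 : 0 ≤ m 1 := by
      have := lfa_ord_nonneg hF (by rw [← Qval_e1 B']; exact hvals _ vec01_mem) k1.1
      omega
    have hmin : m 0 ≤ 0 ∨ m 1 ≤ 0 := by
      by_contra hc
      push_neg at hc
      have hQ : Qval B' w = B' 0 0 * (w 0 * w 0) + B' 1 1 * (w 1 * w 1) := by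
        rw [Qval_fin_two, hz01, hz10]; ring
      have hterm : ∀ t : Fin 2, B' t t * (w t * w t) = 0 ∨
          (1 : ℤ) ≤ ord (B' t t * (w t * w t)) := by
        intro t
        by_cases hwt : w t = 0
        · left; rw [hwt]; ring
        · right
          have hww : w t * w t ≠ 0 := mul_ne_zero hwt hwt
          rw [hF.ord_mul _ _ (key t).1 hww, hF.ord_mul _ _ hwt hwt, (key t).2]
          have hwo := lfa_ord_nonneg hF (hw t) hwt
          have hmt : 1 ≤ m t := by
            have ht01 : t = 0 ∨ t = 1 := by fin_cases t <;> simp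
            rcases ht01 with rfl | rfl <;> omega
          omega
      have := lfa_add_ge hF (hterm 0) (hterm 1)
      rw [← hQ, hw1] at this
      rcases this with h | h
      · exact one_ne_zero h
      · rw [lfa_ord_one hF] at h; omega
    right
    refine ⟨by omega, ?_⟩
    rcases hs01 with rfl | rfl <;> omega
lemma equivO_refl (hF : LocalFieldAxioms O ord 2 q) (G : Matrix (Fin 2) (Fin 2) F) :
    EquivO O ord G G := by
  refine ⟨1, ⟨?_, ?_, ?_⟩, by simp⟩
  · intro i j
    by_cases h : i = j <;> simp [Matrix.one_apply, h, O.one_mem, O.zero_mem]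
  · simp
  · simp [lfa_ord_one hF]

lemma unimod_single {m : Fin 2 → ℤ} {j : ℤ} (t : Fin 2) (h₀ : m t = j)
    (huniq : ∀ s, m s = j → s = t) {C : Matrix (Fin 2) (Fin 2) F}
    (hmem : C t t ∈ O) (h0 : C t t ≠ 0) (ho : ord (C t t) = 0) :
    IsUnimodularMat O ord (C.submatrix (fun s : {s : Fin 2 // m s = j} => (s : Fin 2))
      (fun s : {s : Fin 2 // m s = j} => (s : Fin 2))) := by
  have hval : ∀ a : {s : Fin 2 // m s = j}, (a : Fin 2) = t := fun a => huniq a.1 a.2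
  refine ⟨?_, ?_, ?_⟩
  · intro a b
    show C (a : Fin 2) (b : Fin 2) ∈ O
    rw [hval a, hval b]; exact hmem
  · rw [det_submatrix_single m j t h₀ huniq]; exact h0
  · rw [det_submatrix_single m j t h₀ huniq]; exact ho

lemma unimod_full {m : Fin 2 → ℤ} {j : ℤ} (hall : ∀ s, m s = j)
    {C : Matrix (Fin 2) (Fin 2) F}
    (hmem : ∀ a b : Fin 2, C a b ∈ O) (h0 : C.det ≠ 0) (ho : ord C.det = 0) :
    IsUnimodularMat O ord (C.submatrix (fun s : {s : Fin 2 // m s = j} => (s : Fin 2))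
      (fun s : {s : Fin 2 // m s = j} => (s : Fin 2))) := by
  refine ⟨fun a b => hmem a b, ?_, ?_⟩
  · rw [det_submatrix_full m j hall]; exact h0
  · rw [det_submatrix_full m j hall]; exact ho

lemma hasJordan_modular (hF : LocalFieldAxioms O ord 2 q) {G : Matrix (Fin 2) (Fin 2) F}
    {i : ℤ} (hmod : IsModularMat O ord π G i) : HasJordanComponent O ord π G i := by
  refine ⟨G, fun _ => i, equivO_refl hF G, ⟨?_, ?_⟩, ⟨0, rfl⟩⟩
  · intro s t h; exact absurd rfl h
  · rintro j ⟨t, ht⟩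
    have hij : i = j := ht
    subst hij
    obtain ⟨hmem, h0, ho⟩ := hmod
    show IsUnimodularMat O ord _
    have hrfl : (π : F) ^ (-i) • (G.submatrix
        (fun s : {s : Fin 2 // (fun _ => i) s = i} => (s : Fin 2))
        (fun s : {s : Fin 2 // (fun _ => i) s = i} => (s : Fin 2)))
        = ((π : F) ^ (-i) • G).submatrix _ _ := rfl
    rw [hrfl]
    exact unimod_full (fun _ => rfl) hmem h0 ho

lemma zpow_neg_mul_pow (hπ0 : π ≠ 0) (k : ℕ) : (π : F) ^ (-(k : ℤ)) * π ^ k = 1 := by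
  rw [← zpow_natCast π k, ← zpow_add₀ hπ0]; simp

lemma hasJordan_split (hF : LocalFieldAxioms O ord 2 q) (hπ0 : π ≠ 0) (hπ1 : ord π = 1)
    {u : F} (hu : u ∈ O) (hu0 : u ≠ 0) (huo : ord u = 0) (k : ℕ) {i : ℤ}
    (hi : i = 0 ∨ i = (k : ℤ)) :
    HasJordanComponent O ord π !![1, 0; 0, u * π ^ k] i := by
  have hπm : π ∈ O := lfa_mem hF (by rw [hπ1]; norm_num)
  have hπk0 : (π : F) ^ k ≠ 0 := pow_ne_zero _ hπ0
  have hentm : u * π ^ k ∈ O := O.mul_mem hu (pow_mem hπm k)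
  have hent0 : u * π ^ k ≠ 0 := mul_ne_zero hu0 hπk0
  set B' : Matrix (Fin 2) (Fin 2) F := !![1, 0; 0, u * π ^ k] with hB'
  set m : Fin 2 → ℤ := ![0, (k : ℤ)] with hm
  refine ⟨B', m, equivO_refl hF B', ⟨?_, ?_⟩, ?_⟩
  · intro s t hst
    have hne : s ≠ t := fun h => hst (by rw [h])
    rcases fin2_cases hne with ⟨rfl, rfl⟩ | ⟨rfl, rfl⟩ <;> simp [hB']
  · rintro j ⟨t, rfl⟩
    show IsUnimodularMat O ord _
    by_cases hk : (k : ℤ) = 0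
    · -- one block of level 0
      have hall : ∀ s, m s = m t := by
        intro s
        have h01 : ∀ a : Fin 2, m a = 0 := by
          intro a; fin_cases a <;> simp [hm, hk]
        rw [h01 s, h01 t]
      have hmt : m t = 0 := by fin_cases t <;> simp [hm, hk]
      have hrfl : (π : F) ^ (-(m t)) • (B'.submatrix
          (fun s : {s : Fin 2 // m s = m t} => (s : Fin 2))
          (fun s : {s : Fin 2 // m s = m t} => (s : Fin 2)))
          = ((π : F) ^ (-(m t)) • B').submatrix _ _ := rfl
      rw [hrfl]
      have hsmul : (π : F) ^ (-(m t)) • B' = B' := by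
        rw [hmt]; simp
      rw [hsmul]
      refine unimod_full hall ?_ ?_ ?_
      · intro a b; fin_cases a <;> fin_cases b <;>
          simp [hB', O.one_mem, O.zero_mem, hentm]
      · rw [Matrix.det_fin_two]; simp [hB', hent0]
      · have hdet : B'.det = u * π ^ k := by rw [Matrix.det_fin_two]; simp [hB']
        rw [hdet, hF.ord_mul _ _ hu0 hπk0, huo, lfa_ord_pow hF hπ0, hπ1]
        omega
    · -- two singleton blocks
      have hrfl : (π : F) ^ (-(m t)) • (B'.submatrix
          (fun s : {s : Fin 2 // m s = m t} => (s : Fin 2))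
          (fun s : {s : Fin 2 // m s = m t} => (s : Fin 2)))
          = ((π : F) ^ (-(m t)) • B').submatrix _ _ := rfl
      rw [hrfl]
      have ht01 : t = 0 ∨ t = 1 := by fin_cases t <;> simp
      rcases ht01 with rfl | rfl
      · have hm0 : m 0 = 0 := by simp [hm]
        have huniq : ∀ s, m s = m 0 → s = 0 := by
          intro s hs
          fin_cases s
          · rfl
          · exfalso; rw [hm0] at hs; simp [hm] at hs; omega
        refine unimod_single 0 rfl huniq ?_ ?_ ?_
        · show (π : F) ^ (-(m 0)) * B' 0 0 ∈ O
          rw [hm0]; simp [hB', O.one_mem]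
        · show (π : F) ^ (-(m 0)) * B' 0 0 ≠ 0
          rw [hm0]; simp [hB']
        · show ord ((π : F) ^ (-(m 0)) * B' 0 0) = 0
          rw [hm0]; simp [hB']; exact lfa_ord_one hF
      · have hm1 : m 1 = (k : ℤ) := by simp [hm]
        have huniq : ∀ s, m s = m 1 → s = 1 := by
          intro s hs
          fin_cases s
          · exfalso; rw [hm1] at hs; simp [hm] at hs; omega
          · rfl
        have hB11 : B' 1 1 = u * π ^ k := by simp [hB']
        have hval : (π : F) ^ (-(m 1)) * B' 1 1 = u := by
          rw [hm1, hB11, mul_comm u (π ^ k), ← mul_assoc, zpow_neg_mul_pow hπ0, one_mul]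
        refine unimod_single 1 rfl huniq ?_ ?_ ?_
        · show (π : F) ^ (-(m 1)) * B' 1 1 ∈ O
          rw [hval]; exact hu
        · show (π : F) ^ (-(m 1)) * B' 1 1 ≠ 0
          rw [hval]; exact hu0
        · show ord ((π : F) ^ (-(m 1)) * B' 1 1) = 0
          rw [hval]; exact huo
  · rcases hi with rfl | rfl
    · exact ⟨0, by simp [hm]⟩
    · exact ⟨1, by simp [hm]⟩
lemma equivO_trans (hF : LocalFieldAxioms O ord 2 q) {A B C : Matrix (Fin 2) (Fin 2) F}
    (h1 : EquivO O ord A B) (h2 : EquivO O ord B C) : EquivO O ord A C := by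
  obtain ⟨U, ⟨hU, hUd, hUo⟩, rfl⟩ := h1
  obtain ⟨V, ⟨hV, hVd, hVo⟩, rfl⟩ := h2
  refine ⟨U * V, ⟨?_, ?_, ?_⟩, ?_⟩
  · intro i j
    rw [Matrix.mul_apply, Fin.sum_univ_two]
    exact O.add_mem (O.mul_mem (hU i 0) (hV 0 j)) (O.mul_mem (hU i 1) (hV 1 j))
  · rw [Matrix.det_mul]; exact mul_ne_zero hUd hVd
  · rw [Matrix.det_mul, hF.ord_mul _ _ hUd hVd, hUo, hVo]; ring
  · rw [Matrix.transpose_mul]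
    noncomm_ring

lemma hasJordan_of_equiv (hF : LocalFieldAxioms O ord 2 q)
    {G B₀ : Matrix (Fin 2) (Fin 2) F} {i : ℤ} (hEq : EquivO O ord G B₀)
    (h : HasJordanComponent O ord π B₀ i) : HasJordanComponent O ord π G i := by
  obtain ⟨B', m, hEq', hJ, hs⟩ := h
  exact ⟨B', m, equivO_trans hF hEq hEq', hJ, hs⟩

lemma gram_vals (h2 : (2 : F) ≠ 0) (hπm : π ∈ O) {T S : F} (hT : T ∈ O) (hS : S ∈ O)
    (f : ℕ) : ∀ x : Fin 2 → F, (∀ s, x s ∈ O) → Qval (normGram π T S f) x ∈ O := by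
  intro x hx
  have hq : Qval (normGram π T S f) x
      = x 0 * x 0 + (π ^ f * T) * (x 0 * x 1) + (π ^ (2 * f) * S) * (x 1 * x 1) := by
    rw [Qval_fin_two]
    simp only [normGram, Matrix.cons_val', Matrix.cons_val_zero, Matrix.cons_val_one,
      Matrix.head_cons, Matrix.head_fin_const, Matrix.empty_val',
      Matrix.cons_val_fin_one, Matrix.of_apply]
    field_simp
    ring
  rw [hq]
  refine O.add_mem (O.add_mem (O.mul_mem (hx 0) (hx 0)) ?_) ?_
  · exact O.mul_mem (O.mul_mem (pow_mem hπm f) hT) (O.mul_mem (hx 0) (hx 1))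
  · exact O.mul_mem (O.mul_mem (pow_mem hπm (2 * f)) hS) (O.mul_mem (hx 1) (hx 1))

lemma gram_one {T S : F} (f : ℕ) : Qval (normGram π T S f) ![1, 0] = 1 := by
  rw [Qval_e0]; simp [normGram]

lemma gram_det (h2 : (2 : F) ≠ 0) {T S : F} (f : ℕ) :
    (normGram π T S f).det = -(π ^ (2 * f) * (T ^ 2 - 4 * S)) / 4 := by
  rw [Matrix.det_fin_two]
  simp only [normGram, Matrix.cons_val', Matrix.cons_val_zero, Matrix.cons_val_one,
    Matrix.head_cons, Matrix.head_fin_const, Matrix.empty_val',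
    Matrix.cons_val_fin_one, Matrix.of_apply]
  have h4 : (4 : F) ≠ 0 := by
    have : (4 : F) = 2 * 2 := by norm_num
    rw [this]; exact mul_ne_zero h2 h2
  field_simp
  ring

lemma gram_det_ne (hπ0 : π ≠ 0) (h2 : (2 : F) ≠ 0) {T S : F} (hΔ0 : T ^ 2 - 4 * S ≠ 0)
    (f : ℕ) : (normGram π T S f).det ≠ 0 := by
  rw [gram_det h2]
  have h4 : (4 : F) ≠ 0 := by
    have : (4 : F) = 2 * 2 := by norm_num
    rw [this]; exact mul_ne_zero h2 h2
  exact div_ne_zero (neg_ne_zero.2 (mul_ne_zero (pow_ne_zero _ hπ0) hΔ0)) h4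

lemma gram_det_ord (hF : LocalFieldAxioms O ord 2 q) (hπ0 : π ≠ 0) (hπ1 : ord π = 1)
    {e : ℕ} (he : ord (2 : F) = e) (h2 : (2 : F) ≠ 0)
    {T S : F} (hΔ0 : T ^ 2 - 4 * S ≠ 0) (f : ℕ) :
    ord (normGram π T S f).det = 2 * (f : ℤ) + ord (T ^ 2 - 4 * S) - 2 * (e : ℤ) := by
  rw [gram_det h2]
  have h4 : (4 : F) ≠ 0 := by
    have : (4 : F) = 2 * 2 := by norm_num
    rw [this]; exact mul_ne_zero h2 h2
  have h4o : ord (4 : F) = 2 * (e : ℤ) := by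
    have : (4 : F) = 2 * 2 := by norm_num
    rw [this, hF.ord_mul _ _ h2 h2, he]; ring
  have hx : π ^ (2 * f) * (T ^ 2 - 4 * S) ≠ 0 := mul_ne_zero (pow_ne_zero _ hπ0) hΔ0
  rw [div_eq_mul_inv, hF.ord_mul _ _ (neg_ne_zero.2 hx) (inv_ne_zero h4),
    lfa_ord_neg hF hx, hF.ord_mul _ _ (pow_ne_zero _ hπ0) hΔ0,
    lfa_ord_pow hF hπ0, lfa_ord_inv hF h4, hπ1, h4o]
  push_cast
  ring

/-- completion of squares -/
lemma gram_split_equiv (hF : LocalFieldAxioms O ord 2 q) {T S : F} {f : ℕ}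
    (hc : π ^ f * T / 2 ∈ O) :
    EquivO O ord (normGram π T S f) !![1, 0; 0, (normGram π T S f).det] := by
  refine ⟨!![1, -(π ^ f * T / 2); 0, 1], ⟨?_, ?_, ?_⟩, ?_⟩
  · intro i j
    fin_cases i <;> fin_cases j <;> simp [O.one_mem, O.zero_mem, O.neg_mem hc]
  · rw [Matrix.det_fin_two]; simp
  · rw [Matrix.det_fin_two]; simpa using lfa_ord_one hF
  · have ht : (!![1, -(π ^ f * T / 2); 0, 1] : Matrix (Fin 2) (Fin 2) F).transpose
        = !![1, 0; -(π ^ f * T / 2), 1] := by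
      ext i j; fin_cases i <;> fin_cases j <;> rfl
    rw [ht,
      show normGram π T S f = !![(1:F), π ^ f * T / 2; π ^ f * T / 2, π ^ (2*f) * S] from rfl,
      Matrix.mul_fin_two, Matrix.mul_fin_two, Matrix.det_fin_two]
    ext i j
    fin_cases i <;> fin_cases j <;> simp [normGram] <;> ring

/-- the `π^i`-modular cases -/
lemma gram_modular (hF : LocalFieldAxioms O ord 2 q) (hπ0 : π ≠ 0) (hπ1 : ord π = 1)
    {e : ℕ} (he : ord (2 : F) = e) (h2 : (2 : F) ≠ 0)
    {T S : F} (hT : T ∈ O) (hS : S ∈ O) (hΔ0 : T ^ 2 - 4 * S ≠ 0)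
    {g' : ℤ} (hT0 : T ≠ 0) (hTg : ord T = g') (hd : ord (T ^ 2 - 4 * S) = 2 * g')
    (hge : g' ≤ (e : ℤ)) (f : ℕ) (hfe : (f : ℤ) + g' - (e : ℤ) ≤ 0) :
    IsModularMat O ord π (normGram π T S f) ((f : ℤ) + g' - (e : ℤ)) := by
  set i : ℤ := (f : ℤ) + g' - (e : ℤ) with hi
  have hzp : (π : F) ^ (-i) ≠ 0 := zpow_ne_zero _ hπ0
  have hzpo : ord ((π : F) ^ (-i)) = -i := by rw [lfa_ord_zpow hF hπ0, hπ1]; ring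
  have hco : ord (π ^ f * T / 2) = (f : ℤ) + g' - (e : ℤ) := by
    have hπfT : π ^ f * T ≠ 0 := mul_ne_zero (pow_ne_zero _ hπ0) hT0
    rw [div_eq_mul_inv, hF.ord_mul _ _ hπfT (inv_ne_zero h2),
      hF.ord_mul _ _ (pow_ne_zero _ hπ0) hT0, lfa_ord_pow hF hπ0,
      lfa_ord_inv hF h2, hπ1, hTg, he]
    ring
  have hc0 : π ^ f * T / 2 ≠ 0 :=
    div_ne_zero (mul_ne_zero (pow_ne_zero _ hπ0) hT0) h2
  refine ⟨?_, ?_, ?_⟩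
  · intro a b
    have hval : (normGram π T S f) a b = 1 ∨ (normGram π T S f) a b = π ^ f * T / 2
        ∨ (normGram π T S f) a b = π ^ (2 * f) * S := by
      fin_cases a <;> fin_cases b <;> simp [normGram] <;> tauto
    rw [Matrix.smul_apply, smul_eq_mul]
    rcases hval with h | h | h <;> rw [h]
    · apply lfa_mem hF
      rw [mul_one, hzpo]; omega
    · apply lfa_mem hF
      rw [hF.ord_mul _ _ hzp hc0, hzpo, hco]; omega
    · by_cases hS0 : S = 0
      · rw [hS0, mul_zero, mul_zero]; exact O.zero_mem
      · apply lfa_mem hF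
        have hb0 : (π : F) ^ (2 * f) * S ≠ 0 := mul_ne_zero (pow_ne_zero _ hπ0) hS0
        rw [hF.ord_mul _ _ hzp hb0, hzpo, hF.ord_mul _ _ (pow_ne_zero _ hπ0) hS0,
          lfa_ord_pow hF hπ0, hπ1]
        have := lfa_ord_nonneg hF hS hS0
        push_cast
        omega
  · rw [det_fin_two_smul]
    exact mul_ne_zero (pow_ne_zero _ hzp) (gram_det_ne hπ0 h2 hΔ0 f)
  · rw [det_fin_two_smul,
      hF.ord_mul _ _ (pow_ne_zero _ hzp) (gram_det_ne hπ0 h2 hΔ0 f),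
      lfa_ord_pow hF hzp, hzpo, gram_det_ord hF hπ0 hπ1 he h2 hΔ0 f, hd]
    push_cast
    ring

lemma gram_indecomp (hF : LocalFieldAxioms O ord 2 q) (hπ0 : π ≠ 0) (h2 : (2 : F) ≠ 0)
    (hπm : π ∈ O) {T S : F} (hT : T ∈ O) (hS : S ∈ O) (hΔ0 : T ^ 2 - 4 * S ≠ 0)
    (f : ℕ) (hDneg : ord (normGram π T S f).det < 0) :
    Indecomposable2 O ord (normGram π T S f) := by
  rintro ⟨B', hEq, h01, h10⟩
  obtain ⟨hv, ho, hd0, hdo⟩ := equiv_invariants hF (gram_vals h2 hπm hT hS f)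
    (gram_one f) (gram_det_ne hπ0 h2 hΔ0 f) hEq
  have hdet2 : B'.det = B' 0 0 * B' 1 1 := by
    rw [Matrix.det_fin_two, h01]; ring
  have hB0 : B' 0 0 ≠ 0 := by
    intro h; rw [hdet2, h, zero_mul] at hd0; exact hd0 rfl
  have hB1 : B' 1 1 ≠ 0 := by
    intro h; rw [hdet2, h, mul_zero] at hd0; exact hd0 rfl
  have hm0 : 0 ≤ ord (B' 0 0) :=
    lfa_ord_nonneg hF (by rw [← Qval_e0 B']; exact hv _ vec10_mem) hB0
  have hm1 : 0 ≤ ord (B' 1 1) :=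
    lfa_ord_nonneg hF (by rw [← Qval_e1 B']; exact hv _ vec01_mem) hB1
  rw [hdet2, hF.ord_mul _ _ hB0 hB1] at hdo
  omega
lemma ord_add_eq (hF : LocalFieldAxioms O ord 2 q) {x y : F} (hx : x ≠ 0)
    (hy : y = 0 ∨ (y ≠ 0 ∧ ord x < ord y)) :
    x + y ≠ 0 ∧ ord (x + y) = ord x := by
  rcases hy with rfl | ⟨hy0, hy⟩
  · simpa using hx
  have hne : x + y ≠ 0 := by
    intro h
    have hyx : y = -x := eq_neg_of_add_eq_zero_right h
    rw [hyx, lfa_ord_neg hF hx] at hy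
    omega
  have h1 : ord x ≤ ord (x + y) := by
    have := hF.min_le_ord_add x y hx hy0 hne
    rw [min_eq_left (le_of_lt hy)] at this
    exact this
  have h2 : min (ord (x + y)) (ord y) ≤ ord x := by
    have hxx : x + y + -y ≠ 0 := by simpa using hx
    have := hF.min_le_ord_add (x + y) (-y) hne (neg_ne_zero.2 hy0) hxx
    rw [lfa_ord_neg hF hy0] at this
    simpa using this
  rcases le_or_gt (ord (x + y)) (ord y) with hc | hc
  · rw [min_eq_left hc] at h2
    exact ⟨hne, le_antisymm h2 h1⟩
  · rw [min_eq_right (le_of_lt hc)] at h2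
    omega

lemma disc_ord_lb (hF : LocalFieldAxioms O ord 2 q) (h2 : (2 : F) ≠ 0) {e : ℕ}
    (he : ord (2 : F) = e) {T S : F} (hS : S ∈ O) (hΔ0 : T ^ 2 - 4 * S ≠ 0)
    {k : ℤ} (hT : T = 0 ∨ k ≤ ord T) (hke : k ≤ (e : ℤ)) :
    2 * k ≤ ord (T ^ 2 - 4 * S) := by
  have h4 : (4 : F) ≠ 0 := by
    have : (4 : F) = 2 * 2 := by norm_num
    rw [this]; exact mul_ne_zero h2 h2
  have h4o : ord (4 : F) = 2 * (e : ℤ) := by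
    have : (4 : F) = 2 * 2 := by norm_num
    rw [this, hF.ord_mul _ _ h2 h2, he]; ring
  have hxt : T ^ 2 = 0 ∨ 2 * k ≤ ord (T ^ 2) := by
    by_cases hT0 : T = 0
    · left; rw [hT0]; ring
    · right
      have hTk : k ≤ ord T := hT.resolve_left hT0
      rw [lfa_ord_pow hF hT0]
      push_cast; omega
  have hys : -(4 * S) = 0 ∨ 2 * k ≤ ord (-(4 * S)) := by
    by_cases hS0 : S = 0
    · left; rw [hS0]; ring
    · right
      have h4S : (4 : F) * S ≠ 0 := mul_ne_zero h4 hS0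
      rw [lfa_ord_neg hF h4S, hF.ord_mul _ _ h4 hS0, h4o]
      have := lfa_ord_nonneg hF hS hS0
      omega
  have hsum := lfa_add_ge hF hxt hys
  rw [← sub_eq_add_neg] at hsum
  exact hsum.resolve_left hΔ0

lemma ord_half_mul (hF : LocalFieldAxioms O ord 2 q) (hπ0 : π ≠ 0) (hπ1 : ord π = 1)
    {e : ℕ} (he : ord (2 : F) = e) (h2 : (2 : F) ≠ 0) {T : F} (hT0 : T ≠ 0) (f : ℕ) :
    π ^ f * T / 2 ≠ 0 ∧ ord (π ^ f * T / 2) = (f : ℤ) + ord T - (e : ℤ) := by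
  have hπfT : π ^ f * T ≠ 0 := mul_ne_zero (pow_ne_zero _ hπ0) hT0
  constructor
  · exact div_ne_zero hπfT h2
  · rw [div_eq_mul_inv, hF.ord_mul _ _ hπfT (inv_ne_zero h2),
      hF.ord_mul _ _ (pow_ne_zero _ hπ0) hT0, lfa_ord_pow hF hπ0,
      lfa_ord_inv hF h2, hπ1, he]
    ring

lemma gram_jordan_levels (hF : LocalFieldAxioms O ord 2 q) (hπ0 : π ≠ 0) (hπ1 : ord π = 1)
    (h2 : (2 : F) ≠ 0) (hπm : π ∈ O) {T S : F} (hT : T ∈ O) (hS : S ∈ O)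
    (hΔ0 : T ^ 2 - 4 * S ≠ 0) (f : ℕ) {i : ℤ}
    (h : HasJordanComponent O ord π (normGram π T S f) i) :
    (2 * i = ord (normGram π T S f).det ∧ i ≤ 0) ∨
    (0 ≤ ord (normGram π T S f).det ∧
      (i = 0 ∨ i = ord (normGram π T S f).det)) := by
  obtain ⟨B', m, hEq, hJ, s, hsi⟩ := h
  obtain ⟨hv, ho, hd0, hdo⟩ := equiv_invariants hF (gram_vals h2 hπm hT hS f)
    (gram_one f) (gram_det_ne hπ0 h2 hΔ0 f) hEq
  exact jordan_forward hF hπ0 hπ1 hv ho hd0 hdo hJ hsi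
lemma disc_ord_eq_of_lt (hF : LocalFieldAxioms O ord 2 q) (h2 : (2 : F) ≠ 0) {e : ℕ}
    (he : ord (2 : F) = e) {T S : F} (hS : S ∈ O) (hT0 : T ≠ 0)
    (hlt : ord T < (e : ℤ)) : ord (T ^ 2 - 4 * S) = 2 * ord T := by
  have h4 : (4 : F) ≠ 0 := by
    have : (4 : F) = 2 * 2 := by norm_num
    rw [this]; exact mul_ne_zero h2 h2
  have h4o : ord (4 : F) = 2 * (e : ℤ) := by
    have : (4 : F) = 2 * 2 := by norm_num
    rw [this, hF.ord_mul _ _ h2 h2, he]; ring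
  have hx2 : T ^ 2 ≠ 0 := pow_ne_zero _ hT0
  have hx2o : ord (T ^ 2) = 2 * ord T := by
    rw [lfa_ord_pow hF hT0]; push_cast; ring
  have hy : -(4 * S) = 0 ∨ (-(4 * S) ≠ 0 ∧ ord (T ^ 2) < ord (-(4 * S))) := by
    by_cases hS0 : S = 0
    · left; rw [hS0]; ring
    · right
      have h4S : (4 : F) * S ≠ 0 := mul_ne_zero h4 hS0
      refine ⟨neg_ne_zero.2 h4S, ?_⟩
      rw [lfa_ord_neg hF h4S, hF.ord_mul _ _ h4 hS0, h4o, hx2o]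
      have := lfa_ord_nonneg hF hS hS0
      omega
  have := ord_add_eq hF hx2 hy
  rw [← sub_eq_add_neg] at this
  rw [this.2, hx2o]

/-- the split (decomposable) case, uniform in the three discriminant cases -/
lemma split_case (hF : LocalFieldAxioms O ord 2 q) (hπ0 : π ≠ 0) (hπ1 : ord π = 1)
    (h2 : (2 : F) ≠ 0) (hπm : π ∈ O) {T S : F} (hT : T ∈ O) (hS : S ∈ O)
    (hΔ0 : T ^ 2 - 4 * S ≠ 0) (f k : ℕ) (hc : π ^ f * T / 2 ∈ O)
    (hkD : (k : ℤ) = ord (normGram π T S f).det) :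
    (∀ i : ℤ, HasJordanComponent O ord π (normGram π T S f) i ↔ (i = 0 ∨ i = (k : ℤ))) ∧
    ∃ u : F, u ∈ O ∧ u ≠ 0 ∧ ord u = 0 ∧
      EquivO O ord (normGram π T S f) !![1, 0; 0, u * π ^ k] := by
  have hdetne := gram_det_ne hπ0 h2 hΔ0 (T := T) (S := S) f
  have hπk0 : (π : F) ^ k ≠ 0 := pow_ne_zero _ hπ0
  set u : F := (normGram π T S f).det * ((π : F) ^ k)⁻¹ with hudef
  have hu0 : u ≠ 0 := mul_ne_zero hdetne (inv_ne_zero hπk0)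
  have huo : ord u = 0 := by
    rw [hudef, hF.ord_mul _ _ hdetne (inv_ne_zero hπk0), lfa_ord_inv hF hπk0,
      lfa_ord_pow hF hπ0, hπ1, ← hkD]
    omega
  have hu : u ∈ O := lfa_mem hF (by rw [huo])
  have hval : u * π ^ k = (normGram π T S f).det := by
    rw [hudef]; exact inv_mul_cancel_right₀ hπk0 _
  have hEq : EquivO O ord (normGram π T S f) !![1, 0; 0, u * π ^ k] := by
    rw [show (!![1, 0; 0, u * π ^ k] : Matrix (Fin 2) (Fin 2) F)
      = !![1, 0; 0, (normGram π T S f).det] by rw [hval]]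
    exact gram_split_equiv hF hc
  refine ⟨?_, u, hu, hu0, huo, hEq⟩
  intro i
  constructor
  · intro h
    have := gram_jordan_levels hF hπ0 hπ1 h2 hπm hT hS hΔ0 f h
    rw [← hkD] at this
    omega
  · intro hi
    exact hasJordan_of_equiv hF hEq (hasJordan_split hF hπ0 hπ1 hu hu0 huo k hi)
/-- Jordan splittings of `L = (𝔬_{E,f}, 𝒩)`. -/
theorem statement17 {F : Type} [Field F] (O : Subring F) (ord : F → ℤ) (q e : ℕ)
    (hF : LocalFieldAxioms O ord 2 q) (he : ord (2 : F) = e)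
    (π : F) (hπ : π ≠ 0 ∧ ord π = 1)
    (E : Type) [CommRing E] [Algebra F E] (ω : E) (d : ℕ) (ξ : ℤ)
    (hE : QuadAlgebraAxioms O ord E ω d ξ)
    (f : ℕ)
    (G : Matrix (Fin 2) (Fin 2) F)
    (hG : G = normGram π (Algebra.trace F E ω) (Algebra.norm F ω) f) :
    (d = 0 →
      (f < e →
        (∀ i : ℤ, HasJordanComponent O ord π G i ↔ i = (f : ℤ) - (e : ℤ)) ∧
        IsModularMat O ord π G ((f : ℤ) - (e : ℤ)) ∧ Indecomposable2 O ord G) ∧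
      (e ≤ f →
        (∀ i : ℤ, HasJordanComponent O ord π G i ↔
          (i = 0 ∨ i = 2 * (f : ℤ) - 2 * (e : ℤ))) ∧
        ∃ u : F, u ∈ O ∧ u ≠ 0 ∧ ord u = 0 ∧
          EquivO O ord G !![1, 0; 0, u * π ^ (2 * f - 2 * e)])) ∧
    (∀ g : ℕ, d = 2 * g → 0 < g → g ≤ e →
      (f < e - g →
        (∀ i : ℤ, HasJordanComponent O ord π G i ↔
          i = (f : ℤ) + (g : ℤ) - (e : ℤ)) ∧
        IsModularMat O ord π G ((f : ℤ) + (g : ℤ) - (e : ℤ)) ∧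
        Indecomposable2 O ord G) ∧
      (e - g ≤ f →
        (∀ i : ℤ, HasJordanComponent O ord π G i ↔
          (i = 0 ∨ i = 2 * (f : ℤ) + 2 * (g : ℤ) - 2 * (e : ℤ))) ∧
        ∃ u : F, u ∈ O ∧ u ≠ 0 ∧ ord u = 0 ∧
          EquivO O ord G !![1, 0; 0, u * π ^ (2 * f + 2 * g - 2 * e)])) ∧
    (d = 2 * e + 1 →
      (∀ i : ℤ, HasJordanComponent O ord π G i ↔ (i = 0 ∨ i = 2 * (f : ℤ) + 1)) ∧
      ∃ u : F, u ∈ O ∧ u ≠ 0 ∧ ord u = 0 ∧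
        EquivO O ord G !![1, 0; 0, u * π ^ (2 * f + 1)]) := by
  obtain ⟨hπ0, hπ1⟩ := hπ
  haveI := hF.charZero
  have h2 : (2 : F) ≠ 0 := two_ne_zero
  have he1 : 1 ≤ (e : ℤ) := by
    have hp := hF.ord_p_pos
    have h22 : ((2 : ℕ) : F) = (2 : F) := by norm_num
    rw [h22, he] at hp
    omega
  subst hG
  set T := Algebra.trace F E ω with hTdef
  set S := Algebra.norm F ω with hSdef
  have hT : T ∈ O := hE.trace_mem
  have hS : S ∈ O := hE.norm_mem
  have hΔ0 : T ^ 2 - 4 * S ≠ 0 := hE.disc_ne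
  have hΔd : ord (T ^ 2 - 4 * S) = (d : ℤ) := hE.disc_ord
  have hπm : π ∈ O := lfa_mem hF (by rw [hπ1]; norm_num)
  have hdord : ord (normGram π T S f).det = 2 * (f : ℤ) + (d : ℤ) - 2 * (e : ℤ) := by
    rw [gram_det_ord hF hπ0 hπ1 he h2 hΔ0 f, hΔd]
  refine ⟨?_, ?_, ?_⟩
  · -- d = 0 : E/F unramified (or split)
    intro hd0
    have hT0 : T ≠ 0 ∧ ord T = 0 := by
      have hnot : ¬ (T = 0 ∨ (1 : ℤ) ≤ ord T) := by
        intro h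
        have := disc_ord_lb hF h2 he hS hΔ0 h he1
        rw [hΔd] at this
        omega
      push_neg at hnot
      have hge0 := lfa_ord_nonneg hF hT hnot.1
      exact ⟨hnot.1, by omega⟩
    constructor
    · -- f < e : modular indecomposable
      intro hfe
      have hmod := gram_modular hF hπ0 hπ1 he h2 hT hS hΔ0 (g' := 0) hT0.1 hT0.2
        (by rw [hΔd]; omega) (by omega) f (by omega)
      rw [show (f : ℤ) + 0 - (e : ℤ) = (f : ℤ) - (e : ℤ) by ring] at hmod
      refine ⟨?_, hmod, gram_indecomp hF hπ0 h2 hπm hT hS hΔ0 f (by omega)⟩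
      intro i
      constructor
      · intro h
        have := gram_jordan_levels hF hπ0 hπ1 h2 hπm hT hS hΔ0 f h
        omega
      · rintro rfl
        exact hasJordan_modular hF hmod
    · -- e ≤ f : split
      intro hef
      have hc : π ^ f * T / 2 ∈ O := by
        apply lfa_mem hF
        rw [(ord_half_mul hF hπ0 hπ1 he h2 hT0.1 f).2, hT0.2]
        omega
      obtain ⟨hiff, u, hu, hu0, huo, hEq⟩ :=
        split_case hF hπ0 hπ1 h2 hπm hT hS hΔ0 f (2 * f - 2 * e) hc (by omega)
      refine ⟨?_, u, hu, hu0, huo, hEq⟩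
      intro i
      rw [hiff i]
      omega
  · -- d = 2g : E/F ramified, even discriminant
    intro g hdg hgpos hge
    constructor
    · -- f < e - g : modular indecomposable
      intro hfeg
      have hglt : g < e := by omega
      have hTg : T ≠ 0 ∧ ord T = (g : ℤ) := by
        have hnot : ¬ (T = 0 ∨ (g : ℤ) + 1 ≤ ord T) := by
          intro h
          have := disc_ord_lb hF h2 he hS hΔ0 (k := (g : ℤ) + 1) h (by omega)
          rw [hΔd] at this
          omega
        push_neg at hnot
        refine ⟨hnot.1, ?_⟩
        by_contra hne
        have hlt : ord T < (g : ℤ) := by omega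
        have := disc_ord_eq_of_lt hF h2 he hS hnot.1 (by omega)
        rw [hΔd] at this
        omega
      have hmod := gram_modular hF hπ0 hπ1 he h2 hT hS hΔ0 (g' := (g : ℤ)) hTg.1 hTg.2
        (by rw [hΔd]; omega) (by omega) f (by omega)
      refine ⟨?_, hmod, gram_indecomp hF hπ0 h2 hπm hT hS hΔ0 f (by omega)⟩
      intro i
      constructor
      · intro h
        have := gram_jordan_levels hF hπ0 hπ1 h2 hπm hT hS hΔ0 f h
        omega
      · rintro rfl
        exact hasJordan_modular hF hmod
    · -- e - g ≤ f : split
      intro hegf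
      have hTor : T = 0 ∨ (g : ℤ) ≤ ord T := by
        by_cases hT0 : T = 0
        · exact Or.inl hT0
        · right
          by_contra hne
          push_neg at hne
          have := disc_ord_eq_of_lt hF h2 he hS hT0 (by omega)
          rw [hΔd] at this
          omega
      have hc : π ^ f * T / 2 ∈ O := by
        by_cases hT0 : T = 0
        · rw [hT0]
          simpa using O.zero_mem
        · apply lfa_mem hF
          rw [(ord_half_mul hF hπ0 hπ1 he h2 hT0 f).2]
          have := hTor.resolve_left hT0
          omega
      obtain ⟨hiff, u, hu, hu0, huo, hEq⟩ :=
        split_case hF hπ0 hπ1 h2 hπm hT hS hΔ0 f (2 * f + 2 * g - 2 * e) hc (by omega)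
      refine ⟨?_, u, hu, hu0, huo, hEq⟩
      intro i
      rw [hiff i]
      omega
  · -- d = 2e + 1 : ramified, odd discriminant
    intro hd3
    have hTor : T = 0 ∨ (e : ℤ) ≤ ord T := by
      by_cases hT0 : T = 0
      · exact Or.inl hT0
      · right
        by_contra hne
        push_neg at hne
        have := disc_ord_eq_of_lt hF h2 he hS hT0 (by omega)
        rw [hΔd] at this
        omega
    have hc : π ^ f * T / 2 ∈ O := by
      by_cases hT0 : T = 0
      · rw [hT0]
        simpa using O.zero_mem
      · apply lfa_mem hF
        rw [(ord_half_mul hF hπ0 hπ1 he h2 hT0 f).2]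
        have := hTor.resolve_left hT0
        omega
    obtain ⟨hiff, u, hu, hu0, huo, hEq⟩ :=
      split_case hF hπ0 hπ1 h2 hπm hT hS hΔ0 f (2 * f + 1) hc (by omega)
    refine ⟨?_, u, hu, hu0, huo, hEq⟩
    intro i
    rw [hiff i]
    omega

end GK
end
end
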